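/- arXiv:1109.4184 — 9 statements merged into one kernel-verified Lean document; each statement's English description precedes it below -/
import Mathlib

section
/- For every integer k ≥ 1, every f ∈ ℝ^k, and every valid function π : ℝ^k → ℝ, there exists a minimal valid function π' : ℝ^k → ℝ such that π'(r) ≤ π(r) for all r ∈ ℝ^k. -/
open scoped BigOperators

noncomputable section

/-- `ℝ^k` with the Euclidean norm. -/
abbrev Vec (k : ℕ) := EuclideanSpace ℝ (Fin k)

/-- The point of `ℝ^k` with the given integer coordinates. -/
def intVec (k : ℕ) (w : Fin k → ℤ) : Vec k := WithLp.toLp 2 (fun i => (w i : ℝ))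

/-- A feasible solution of the infinite group relaxation: a finitely supported
`s : ℝ^k → ℕ` with `f + ∑ r, s r • r ∈ ℤ^k`. -/
def IsFeasible (k : ℕ) (f : Vec k) (s : Vec k →₀ ℕ) : Prop :=
  ∃ w : Fin k → ℤ, f + ∑ r ∈ s.support, (s r : ℝ) • r = intVec k w

/-- A valid function for the infinite group relaxation. -/
def IsValid (k : ℕ) (f : Vec k) (π : Vec k → ℝ) : Prop :=
  (∀ r, 0 ≤ π r) ∧
  ∀ s : Vec k →₀ ℕ, IsFeasible k f s → 1 ≤ ∑ r ∈ s.support, π r * (s r : ℝ)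

/-- A minimal valid function: no valid `π' ≠ π` with `π' ≤ π` pointwise. -/
def IsMinimal (k : ℕ) (f : Vec k) (π : Vec k → ℝ) : Prop :=
  IsValid k f π ∧ ¬ ∃ π' : Vec k → ℝ, IsValid k f π' ∧ π' ≠ π ∧ ∀ r, π' r ≤ π r

/-- `S(θ)`: the feasible solutions satisfying the inequality of `θ` at equality. -/
def Ssol (k : ℕ) (f : Vec k) (θ : Vec k → ℝ) : Set (Vec k →₀ ℕ) :=
  {s | IsFeasible k f s ∧ ∑ r ∈ s.support, θ r * (s r : ℝ) = 1}

/-- A facet. -/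
def IsFacet (k : ℕ) (f : Vec k) (π : Vec k → ℝ) : Prop :=
  IsValid k f π ∧
  ∀ π' : Vec k → ℝ, IsValid k f π' → Ssol k f π ⊆ Ssol k f π' → π' = π

/-- An extreme valid function. -/
def IsExtremeValid (k : ℕ) (f : Vec k) (π : Vec k → ℝ) : Prop :=
  IsValid k f π ∧ ∀ π₁ π₂ : Vec k → ℝ, IsValid k f π₁ → IsValid k f π₂ →
    (∀ r, π r = (1 / 2) * π₁ r + (1 / 2) * π₂ r) → π₁ = π ∧ π₂ = π

/-- `E(θ)`: the pairs where `θ` is additive. -/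
def Eadd (k : ℕ) (θ : Vec k → ℝ) : Set (Vec k × Vec k) :=
  {p | θ (p.1 + p.2) = θ p.1 + θ p.2}

/-- `θ` is genuinely `k`-dimensional: it does not factor through a linear map to `ℝ^(k-1)`. -/
def GenuinelyFullDim (k : ℕ) (θ : Vec k → ℝ) : Prop :=
  ¬ ∃ (φ : Vec (k - 1) → ℝ) (T : Vec k →ₗ[ℝ] Vec (k - 1)), θ = φ ∘ T

/-- The cone generated by a finite family of vectors. -/
def coneOf {k m : ℕ} (v : Fin m → Vec k) : Set (Vec k) :=
  {x | ∃ lam : Fin m → ℝ, (∀ i, 0 ≤ lam i) ∧ x = ∑ i, lam i • v i}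

/-- The cone generated by a set of vectors. -/
def coneOfSet {k : ℕ} (Vs : Set (Vec k)) : Set (Vec k) :=
  {x | ∃ (n : ℕ) (v : Fin n → Vec k) (lam : Fin n → ℝ),
    (∀ i, v i ∈ Vs) ∧ (∀ i, 0 ≤ lam i) ∧ x = ∑ i, lam i • v i}

/-- A polyhedron: an intersection of finitely many closed halfspaces. -/
def IsPolyhedron {k : ℕ} (P : Set (Vec k)) : Prop :=
  ∃ (n : ℕ) (a : Fin n → Vec k) (b : Fin n → ℝ),
    P = {x | ∀ i, (inner ℝ (a i) x : ℝ) ≤ b i}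

/-- A face of a polyhedron cut out by a valid inequality. -/
def IsFace {k : ℕ} (F P : Set (Vec k)) : Prop :=
  ∃ (a : Vec k) (b : ℝ), (∀ x ∈ P, (inner ℝ a x : ℝ) ≤ b) ∧
    F = {x | x ∈ P ∧ (inner ℝ a x : ℝ) = b}

/-- A polyhedral complex in `ℝ^k`. -/
structure PolyhedralComplex (k : ℕ) where
  cells : Set (Set (Vec k))
  poly : ∀ P ∈ cells, IsPolyhedron P
  faces_mem : ∀ P ∈ cells, ∀ F : Set (Vec k), IsFace F P → F ∈ cells
  inter_face : ∀ P ∈ cells, ∀ Q ∈ cells, IsFace (P ∩ Q) P ∧ IsFace (P ∩ Q) Q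

/-- A maximal cell of a polyhedral complex. -/
def IsMaximalCell {k : ℕ} (PC : PolyhedralComplex k) (P : Set (Vec k)) : Prop :=
  P ∈ PC.cells ∧ ∀ Q ∈ PC.cells, P ⊆ Q → Q = P

/-- A pure complex: all maximal cells are full-dimensional. -/
def PolyhedralComplex.Pure {k : ℕ} (PC : PolyhedralComplex k) : Prop :=
  ∀ P : Set (Vec k), IsMaximalCell PC P → (interior P).Nonempty

/-- A complete complex: the union of the cells is all of `ℝ^k`. -/
def PolyhedralComplex.Complete {k : ℕ} (PC : PolyhedralComplex k) : Prop :=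
  ⋃₀ PC.cells = Set.univ

/-- A polyhedral fan: finitely many cells, all of which are cones. -/
def IsFan {k : ℕ} (F : PolyhedralComplex k) : Prop :=
  F.cells.Finite ∧ ∀ C ∈ F.cells, ∀ x ∈ C, ∀ t : ℝ, 0 ≤ t → t • x ∈ C

/-- A locally finite polyhedral complex: near each point it looks like a translated fan. -/
def PolyhedralComplex.LocFinite {k : ℕ} (PC : PolyhedralComplex k) : Prop :=
  ∀ r : Vec k, ∃ ε : ℝ, 0 < ε ∧ ∃ F : PolyhedralComplex k, IsFan F ∧
    {S : Set (Vec k) | ∃ P ∈ PC.cells, S = P ∩ Metric.ball r ε ∧ S.Nonempty} =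
    {S : Set (Vec k) | ∃ C ∈ F.cells,
      S = ((fun x => x + r) '' C) ∩ Metric.ball r ε ∧ S.Nonempty}

/-- `θ` is piecewise linear with cell complex `PC` (pure and complete), the maximal
cell `P` carrying the gradient `grad P`. -/
def IsPWLWith {k : ℕ} (PC : PolyhedralComplex k) (grad : Set (Vec k) → Vec k)
    (θ : Vec k → ℝ) : Prop :=
  PC.Pure ∧ PC.Complete ∧
  ∀ P : Set (Vec k), IsMaximalCell PC P →
    ∃ δ : ℝ, ∀ x ∈ P, θ x = (inner ℝ (grad P) x : ℝ) + δ

/-- The gradient set of a piecewise linear function. -/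
def gradSet {k : ℕ} (PC : PolyhedralComplex k) (grad : Set (Vec k) → Vec k) : Set (Vec k) :=
  {g | ∃ P : Set (Vec k), IsMaximalCell PC P ∧ grad P = g}

/-- For every valid function there is a minimal valid function dominated by it. -/
theorem statement0 (k : ℕ) (hk : 1 ≤ k) (f : Vec k) (π : Vec k → ℝ)
    (hπ : IsValid k f π) :
    ∃ π' : Vec k → ℝ, IsMinimal k f π' ∧ ∀ r, π' r ≤ π r := by
  classical
  set S : Set (Vec k → ℝ) := {g | IsValid k f g ∧ ∀ r, g r ≤ π r} with hS
  have hπS : π ∈ S := ⟨hπ, fun r => le_rfl⟩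
  -- Zorn on the order dual: chains have lower bounds
  have key : ∀ c ⊆ S, IsChain (· ≤ ·) c → ∀ y ∈ c, ∃ lb ∈ S, ∀ z ∈ c, lb ≤ z := by
    intro c hcS hchain y hyc
    have hcne : c.Nonempty := ⟨y, hyc⟩
    haveI : Nonempty c := hcne.to_subtype
    -- pointwise infimum
    set g : Vec k → ℝ := fun r => ⨅ h : c, (h : Vec k → ℝ) r with hg
    have hbdd : ∀ r : Vec k, BddBelow (Set.range fun h : c => (h : Vec k → ℝ) r) := by
      intro r
      refine ⟨0, ?_⟩
      rintro x ⟨h, rfl⟩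
      exact (hcS h.2).1.1 r
    have hg_le : ∀ h ∈ c, ∀ r, g r ≤ h r := by
      intro h hh r
      exact ciInf_le (hbdd r) ⟨h, hh⟩
    have hg_nonneg : ∀ r, 0 ≤ g r := by
      intro r
      refine le_ciInf fun h => (hcS h.2).1.1 r
    -- for any ε > 0 and finite set t, find a chain element within ε of g on t
    have happrox : ∀ ε : ℝ, 0 < ε → ∀ t : Finset (Vec k),
        ∃ h ∈ c, ∀ r ∈ t, (h : Vec k → ℝ) r < g r + ε := by
      intro ε hε t
      induction t using Finset.induction with
      | empty => exact ⟨y, hyc, fun r hr => absurd hr (Finset.notMem_empty r)⟩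
      | @insert a t ha ih =>
        obtain ⟨h, hhc, hh⟩ := ih
        have : ∃ ha' : c, (ha' : Vec k → ℝ) a < g a + ε := by
          by_contra hcon
          push_neg at hcon
          have : g a + ε ≤ g a := le_ciInf fun h' => hcon h'
          linarith
        obtain ⟨⟨h', hh'c⟩, hh'⟩ := this
        rcases hchain.total hhc hh'c with hle | hle
        · refine ⟨h, hhc, fun r hr => ?_⟩
          rcases Finset.mem_insert.mp hr with rfl | hr
          · exact lt_of_le_of_lt (hle r) hh'
          · exact hh r hr
        · refine ⟨h', hh'c, fun r hr => ?_⟩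
          rcases Finset.mem_insert.mp hr with rfl | hr
          · exact hh'
          · exact lt_of_le_of_lt (hle r) (hh r hr)
    have hgvalid : IsValid k f g := by
      refine ⟨hg_nonneg, fun s hs => ?_⟩
      refine le_of_forall_pos_le_add fun ε hε => ?_
      set B : ℝ := ∑ r ∈ s.support, (s r : ℝ) with hB
      have hB0 : 0 ≤ B := Finset.sum_nonneg fun r _ => Nat.cast_nonneg _
      have hε' : 0 < ε / (B + 1) := div_pos hε (by linarith)
      obtain ⟨h, hhc, hh⟩ := happrox (ε / (B + 1)) hε' s.support
      have h1 : (1 : ℝ) ≤ ∑ r ∈ s.support, h r * (s r : ℝ) := (hcS hhc).1.2 s hs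
      have h2 : ∑ r ∈ s.support, h r * (s r : ℝ) ≤
          ∑ r ∈ s.support, (g r + ε / (B + 1)) * (s r : ℝ) := by
        refine Finset.sum_le_sum fun r hr => ?_
        exact mul_le_mul_of_nonneg_right (le_of_lt (hh r hr)) (Nat.cast_nonneg _)
      have h3 : ∑ r ∈ s.support, (g r + ε / (B + 1)) * (s r : ℝ) =
          (∑ r ∈ s.support, g r * (s r : ℝ)) + (ε / (B + 1)) * B := by
        rw [hB, Finset.mul_sum, ← Finset.sum_add_distrib]
        exact Finset.sum_congr rfl fun r _ => by ring
      have h4 : (ε / (B + 1)) * B ≤ ε := by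
        rw [div_mul_eq_mul_div, div_le_iff₀ (by linarith)]
        nlinarith
      linarith
    refine ⟨g, ⟨hgvalid, fun r => le_trans (hg_le y hyc r) ((hcS hyc).2 r)⟩,
      fun z hz r => hg_le z hz r⟩
  -- apply Zorn on the dual order
  obtain ⟨m, hmπ, hmS, hmax⟩ :=
    zorn_le_nonempty₀ (α := (Vec k → ℝ)ᵒᵈ) (OrderDual.ofDual ⁻¹' S)
      (fun c hcS hchain y hyc => by
        obtain ⟨lb, hlbS, hlb⟩ := key (OrderDual.ofDual '' c)
          (fun x ⟨p, hp, hpx⟩ => hpx ▸ hcS hp)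
          (by
            rintro _ ⟨p, hpc, rfl⟩ _ ⟨q, hqc, rfl⟩ hpq
            rcases hchain hpc hqc (fun h => hpq (congrArg OrderDual.ofDual h)) with h | h
            · exact Or.inr h
            · exact Or.inl h)
          (OrderDual.ofDual y) ⟨y, hyc, rfl⟩
        exact ⟨OrderDual.toDual lb, hlbS, fun z hz => hlb _ ⟨z, hz, rfl⟩⟩)
      (OrderDual.toDual π) hπS
  refine ⟨OrderDual.ofDual m, ⟨hmS.1, ?_⟩, fun r => hmπ r⟩
  rintro ⟨π', hπ'valid, hπ'ne, hπ'le⟩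
  have hπ'S : OrderDual.toDual π' ∈ OrderDual.ofDual ⁻¹' S := by
    refine ⟨hπ'valid, fun r => le_trans (hπ'le r) (hmπ r)⟩
  have h1 : m ≤ OrderDual.toDual π' := fun r => hπ'le r
  have h2 : OrderDual.toDual π' ≤ m := hmax hπ'S h1
  exact hπ'ne (congrArg OrderDual.ofDual (le_antisymm h2 h1))
end
end

section
/- If a valid function π : ℝ^k → ℝ is a facet, then π is extreme. -/
open scoped BigOperators

noncomputable section

/-- If a valid function is a facet, then it is extreme. -/
theorem statement1 (k : ℕ) (hk : 1 ≤ k) (f : Vec k) (π : Vec k → ℝ)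
    (hfacet : IsFacet k f π) :
    IsExtremeValid k f π := by
  obtain ⟨hvalid, hf⟩ := hfacet
  refine ⟨hvalid, fun π₁ π₂ h₁ h₂ hconv => ?_⟩
  have key : ∀ s : Vec k →₀ ℕ, s ∈ Ssol k f π → s ∈ Ssol k f π₁ ∧ s ∈ Ssol k f π₂ := by
    intro s hs
    obtain ⟨hfeas, hsum⟩ := hs
    have e : ∑ r ∈ s.support, π r * (s r : ℝ) =
        (1/2) * (∑ r ∈ s.support, π₁ r * (s r : ℝ))
        + (1/2) * (∑ r ∈ s.support, π₂ r * (s r : ℝ)) := by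
      rw [Finset.mul_sum, Finset.mul_sum, ← Finset.sum_add_distrib]
      exact Finset.sum_congr rfl fun r _ => by rw [hconv r]; ring
    have h1 : 1 ≤ ∑ r ∈ s.support, π₁ r * (s r : ℝ) := h₁.2 s hfeas
    have h2 : 1 ≤ ∑ r ∈ s.support, π₂ r * (s r : ℝ) := h₂.2 s hfeas
    constructor
    · exact ⟨hfeas, by nlinarith [e, hsum]⟩
    · exact ⟨hfeas, by nlinarith [e, hsum]⟩
  have e1 : π₁ = π := hf π₁ h₁ fun s hs => (key s hs).1
  have e2 : π₂ = π := hf π₂ h₂ fun s hs => (key s hs).2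
  exact ⟨e1, e2⟩
end
end

section
/- Let π : ℝ^k → ℝ be a nonnegative function. Then π is a minimal valid function if and only if π(0) = 0, π is periodic with respect to the lattice ℤ^k, π is subadditive, and π satisfies the symmetry condition π(r) + π(−f − r) = 1 for all r ∈ ℝ^k. -/
open scoped BigOperators

noncomputable section

open scoped Classical

namespace GJ
variable {k : ℕ}

lemma intVec_zero : intVec k 0 = 0 := by ext i; simp [intVec]
lemma intVec_add (w₁ w₂ : Fin k → ℤ) : intVec k (w₁ + w₂) = intVec k w₁ + intVec k w₂ := by
  ext i; simp [intVec]
lemma intVec_neg (w : Fin k → ℤ) : intVec k (-w) = -intVec k w := by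
  ext i; simp [intVec]
lemma smul_intVec (n : ℕ) (w : Fin k → ℤ) :
    (n : ℝ) • intVec k w = intVec k (fun i => n * w i) := by
  ext i; simp [intVec]; try push_cast; try ring

def vsum (s : Vec k →₀ ℕ) : Vec k := s.sum fun r n => (n : ℝ) • r
def psum (π : Vec k → ℝ) (s : Vec k →₀ ℕ) : ℝ := s.sum fun r n => π r * n

lemma vsum_def (s : Vec k →₀ ℕ) : ∑ r ∈ s.support, (s r : ℝ) • r = vsum s := rfl
lemma psum_def (π : Vec k → ℝ) (s : Vec k →₀ ℕ) :
    ∑ r ∈ s.support, π r * (s r : ℝ) = psum π s := rfl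

lemma vsum_add (s t : Vec k →₀ ℕ) : vsum (s + t) = vsum s + vsum t := by
  unfold vsum
  exact Finsupp.sum_add_index' (fun a => by simp) (fun a b c => by push_cast; exact add_smul _ _ _)

lemma psum_add (π : Vec k → ℝ) (s t : Vec k →₀ ℕ) : psum π (s + t) = psum π s + psum π t := by
  unfold psum
  exact Finsupp.sum_add_index' (fun a => by simp) (fun a b c => by push_cast; ring)

lemma vsum_single (a : Vec k) (n : ℕ) : vsum (Finsupp.single a n) = (n : ℝ) • a := by
  unfold vsum; exact Finsupp.sum_single_index (by simp)

lemma psum_single (π : Vec k → ℝ) (a : Vec k) (n : ℕ) :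
    psum π (Finsupp.single a n) = π a * n := by
  unfold psum; exact Finsupp.sum_single_index (by simp)

lemma vsum_smul (n : ℕ) (t : Vec k →₀ ℕ) : vsum (n • t) = (n : ℝ) • vsum t := by
  unfold vsum
  rw [Finsupp.sum_of_support_subset _ Finsupp.support_smul _ (by simp), Finsupp.sum,
    Finset.smul_sum]
  refine Finset.sum_congr rfl fun x hx => ?_
  rw [Finsupp.smul_apply, smul_eq_mul]; push_cast; rw [mul_smul]

lemma psum_smul (π : Vec k → ℝ) (n : ℕ) (t : Vec k →₀ ℕ) :
    psum π (n • t) = (n : ℝ) * psum π t := by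
  unfold psum
  rw [Finsupp.sum_of_support_subset _ Finsupp.support_smul _ (by simp), Finsupp.sum,
    Finset.mul_sum]
  refine Finset.sum_congr rfl fun x hx => ?_
  rw [Finsupp.smul_apply, smul_eq_mul]; push_cast; ring

lemma vsum_erase (c : Vec k) (s : Vec k →₀ ℕ) :
    vsum (Finsupp.erase c s) = vsum s - (s c : ℝ) • c := by
  have h : vsum (Finsupp.single c (s c) + Finsupp.erase c s) = vsum s := by
    rw [Finsupp.single_add_erase]
  rw [vsum_add, vsum_single, add_comm] at h
  exact eq_sub_of_add_eq h

lemma psum_nonneg {π : Vec k → ℝ} (hn : ∀ r, 0 ≤ π r) (s : Vec k →₀ ℕ) : 0 ≤ psum π s :=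
  Finset.sum_nonneg fun r _ => mul_nonneg (hn r) (by positivity)

variable {π : Vec k → ℝ}

lemma pi_nsmul_le (h0 : π 0 = 0) (hsub : ∀ a b, π (a + b) ≤ π a + π b) (n : ℕ) (x : Vec k) :
    π ((n : ℝ) • x) ≤ n * π x := by
  induction n with
  | zero => simp [h0]
  | succ m ih =>
    have : ((m + 1 : ℕ) : ℝ) • x = (m : ℝ) • x + x := by push_cast [add_smul]; simp
    rw [this]
    calc π ((m : ℝ) • x + x) ≤ π ((m : ℝ) • x) + π x := hsub _ _
      _ ≤ m * π x + π x := by linarith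
      _ = (m + 1 : ℕ) * π x := by push_cast; ring

lemma pi_finsum_le (h0 : π 0 = 0) (hsub : ∀ a b, π (a + b) ≤ π a + π b)
    (B : Finset (Vec k)) (m : Vec k → ℕ) :
    π (∑ x ∈ B, (m x : ℝ) • x) ≤ ∑ x ∈ B, π x * (m x : ℝ) := by
  induction B using Finset.induction with
  | empty => simp [h0]
  | @insert a B ha ih =>
    rw [Finset.sum_insert ha, Finset.sum_insert ha]
    have h1 := hsub ((m a : ℝ) • a) (∑ x ∈ B, (m x : ℝ) • x)
    have h2 := pi_nsmul_le h0 hsub (m a) a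
    linarith

lemma pi_vsum_le (h0 : π 0 = 0) (hsub : ∀ a b, π (a + b) ≤ π a + π b) (s : Vec k →₀ ℕ) :
    π (vsum s) ≤ psum π s :=
  pi_finsum_le h0 hsub s.support s


lemma psum_congr {π π' : Vec k → ℝ} (s : Vec k →₀ ℕ)
    (h : ∀ r ∈ s.support, π r = π' r) : psum π s = psum π' s :=
  Finsupp.sum_congr fun r hr => by simp only [h r hr]

lemma min_le_rep {f : Vec k} {π : Vec k → ℝ} (hm : IsMinimal k f π) (c : Vec k)
    (t : Vec k →₀ ℕ) (u : Fin k → ℤ) (hct : t c = 0)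
    (hrep : vsum t = c + intVec k u) : π c ≤ psum π t := by
  by_contra hlt
  push_neg at hlt
  apply hm.2
  set V := psum π t with hV
  set π' : Vec k → ℝ := fun x => if x = c then V else π x with hπ'
  have hπ'c : π' c = V := by simp [hπ']
  have hπ'ne : ∀ x, x ≠ c → π' x = π x := fun x hx => by simp [hπ', hx]
  refine ⟨π', ⟨?_, ?_⟩, ?_, ?_⟩
  · intro r
    rcases eq_or_ne r c with h | h
    · rw [h, hπ'c]; exact psum_nonneg hm.1.1 t
    · rw [hπ'ne r h]; exact hm.1.1 r
  · intro s hs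
    obtain ⟨w, hw⟩ := hs
    rw [vsum_def] at hw
    set s' : Vec k →₀ ℕ := Finsupp.erase c s + s c • t with hs'
    have hfeas : IsFeasible k f s' := by
      refine ⟨w + fun i => (s c : ℤ) * u i, ?_⟩
      rw [vsum_def s', hs', vsum_add, vsum_erase, vsum_smul, hrep, intVec_add, smul_add,
        smul_intVec]
      rw [← hw]; abel
    have h1 := hm.1.2 s' hfeas
    rw [psum_def] at h1 ⊢
    have hsplit : psum π' s = psum π s' := by
      have e1 : psum π' s = π' c * (s c : ℝ) + psum π' (Finsupp.erase c s) := by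
        conv_lhs => rw [← Finsupp.single_add_erase c s]
        rw [psum_add, psum_single]
      have e2 : psum π' (Finsupp.erase c s) = psum π (Finsupp.erase c s) := by
        refine psum_congr _ fun r hr => ?_
        rw [Finsupp.support_erase, Finset.mem_erase] at hr
        exact hπ'ne r hr.1
      rw [e1, e2, hπ'c, hs', psum_add, psum_smul]
      ring
    rw [hsplit]; exact h1
  · intro h
    have := congrFun h c
    rw [hπ'c] at this
    exact absurd this (ne_of_lt hlt)
  · intro r
    rcases eq_or_ne r c with h | h
    · rw [h, hπ'c]; exact le_of_lt hlt
    · rw [hπ'ne r h]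

lemma min_pi_zero {f : Vec k} {π : Vec k → ℝ} (hm : IsMinimal k f π) : π 0 = 0 := by
  have h := min_le_rep hm 0 0 0 rfl (by rw [intVec_zero]; simp [vsum])
  have h2 : psum π (0 : Vec k →₀ ℕ) = 0 := by simp [psum]
  rw [h2] at h
  exact le_antisymm h (hm.1.1 0)

lemma min_periodic {f : Vec k} {π : Vec k → ℝ} (hm : IsMinimal k f π) :
    ∀ (r : Vec k) (w : Fin k → ℤ), π (r + intVec k w) = π r := by
  have aux : ∀ (r : Vec k) (w : Fin k → ℤ), π (r + intVec k w) ≤ π r := by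
    intro r w
    rcases eq_or_ne (intVec k w) 0 with h | h
    · rw [h, add_zero]
    · have hne : r + intVec k w ≠ r := by
        intro hh
        exact h (by linear_combination (norm := module) hh)
      have h1 : (Finsupp.single r 1 : Vec k →₀ ℕ) (r + intVec k w) = 0 :=
        Finsupp.single_eq_of_ne' (Ne.symm hne)
      have h2 : vsum (Finsupp.single r 1) = (r + intVec k w) + intVec k (-w) := by
        rw [vsum_single, intVec_neg, Nat.cast_one, one_smul]; abel
      have := min_le_rep hm (r + intVec k w) (Finsupp.single r 1) (-w) h1 h2
      rwa [psum_single, Nat.cast_one, mul_one] at this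
  intro r w
  refine le_antisymm (aux r w) ?_
  have := aux (r + intVec k w) (-w)
  rw [intVec_neg] at this
  have e : r + intVec k w + -intVec k w = r := by abel
  rwa [e] at this

lemma min_subadd {f : Vec k} {π : Vec k → ℝ} (hm : IsMinimal k f π) :
    ∀ a b : Vec k, π (a + b) ≤ π a + π b := by
  have h0 := min_pi_zero hm
  intro a b
  rcases eq_or_ne a 0 with ha | ha
  · rw [ha, zero_add, h0, zero_add]
  rcases eq_or_ne b 0 with hb | hb
  · rw [hb, add_zero, h0, add_zero]
  have hca : a + b ≠ a := fun h => hb (by linear_combination (norm := module) h)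
  have hcb : a + b ≠ b := fun h => ha (by linear_combination (norm := module) h)
  set t : Vec k →₀ ℕ := Finsupp.single a 1 + Finsupp.single b 1 with ht
  have hct : t (a + b) = 0 := by
    have e1 : (Finsupp.single a 1 : Vec k →₀ ℕ) (a + b) = 0 :=
      Finsupp.single_eq_of_ne' (Ne.symm hca)
    have e2 : (Finsupp.single b 1 : Vec k →₀ ℕ) (a + b) = 0 :=
      Finsupp.single_eq_of_ne' (Ne.symm hcb)
    rw [ht, Finsupp.add_apply, e1, e2]
  have hrep : vsum t = (a + b) + intVec k 0 := by
    rw [ht, vsum_add, vsum_single, vsum_single, intVec_zero, Nat.cast_one, one_smul, one_smul,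
      add_zero]
  have := min_le_rep hm (a + b) t 0 hct hrep
  rwa [ht, psum_add, psum_single, psum_single, Nat.cast_one, mul_one, mul_one] at this

lemma min_le_one {f : Vec k} {π : Vec k → ℝ} (hm : IsMinimal k f π) : ∀ r, π r ≤ 1 := by
  set π₁ : Vec k → ℝ := fun x => min (π x) 1 with hπ₁
  have hvalid : IsValid k f π₁ := by
    constructor
    · intro r; exact le_min (hm.1.1 r) zero_le_one
    · intro s hs
      by_cases hex : ∃ r ∈ s.support, 1 ≤ π r
      · obtain ⟨r, hr, h1⟩ := hex
        have hsr : (1 : ℝ) ≤ (s r : ℝ) := by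
          have := Finsupp.mem_support_iff.mp hr
          exact_mod_cast Nat.one_le_iff_ne_zero.mpr this
        calc (1 : ℝ) = 1 * 1 := by ring
          _ ≤ π₁ r * (s r : ℝ) := by
            exact mul_le_mul (le_min h1 le_rfl) hsr zero_le_one (le_min (hm.1.1 r) zero_le_one)
          _ ≤ ∑ x ∈ s.support, π₁ x * (s x : ℝ) := by
            exact Finset.single_le_sum (f := fun x => π₁ x * (s x : ℝ)) (fun x _ => mul_nonneg
              (le_min (hm.1.1 x) zero_le_one) (by positivity)) hr
      · push_neg at hex
        have : ∑ x ∈ s.support, π₁ x * (s x : ℝ) = ∑ x ∈ s.support, π x * (s x : ℝ) := by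
          refine Finset.sum_congr rfl fun x hx => ?_
          rw [hπ₁]; simp only [min_eq_left (le_of_lt (hex x hx))]
        rw [this]; exact hm.1.2 s hs
  have heq : π₁ = π := by
    by_contra hne
    exact hm.2 ⟨π₁, hvalid, hne, fun r => min_le_left _ _⟩
  intro r
  have := congrFun heq r
  rw [hπ₁] at this
  simp only at this
  rw [← this]
  exact min_le_right _ _

lemma valid_sym_ge {f : Vec k} {π : Vec k → ℝ} (hv : IsValid k f π) :
    ∀ r : Vec k, 1 ≤ π r + π (-f - r) := by
  intro r
  set s : Vec k →₀ ℕ := Finsupp.single r 1 + Finsupp.single (-f - r) 1 with hs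
  have hfeas : IsFeasible k f s := by
    refine ⟨0, ?_⟩
    rw [vsum_def s, hs, vsum_add, vsum_single, vsum_single, intVec_zero, Nat.cast_one, one_smul,
      one_smul]
    abel
  have := hv.2 s hfeas
  rw [psum_def, hs, psum_add, psum_single, psum_single, Nat.cast_one, mul_one, mul_one] at this
  exact this


lemma intVec_sum {α : Type*} (A : Finset α) (g : α → Fin k → ℤ) :
    intVec k (∑ x ∈ A, g x) = ∑ x ∈ A, intVec k (g x) := by
  induction A using Finset.cons_induction with
  | empty => simp [intVec_zero]
  | cons a B ha ih => rw [Finset.sum_cons, Finset.sum_cons, intVec_add, ih]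

lemma intVec_sub (w₁ w₂ : Fin k → ℤ) : intVec k (w₁ - w₂) = intVec k w₁ - intVec k w₂ := by
  rw [sub_eq_add_neg, sub_eq_add_neg, intVec_add, intVec_neg]

lemma min_sym {f : Vec k} {π : Vec k → ℝ} (hm : IsMinimal k f π) :
    ∀ r : Vec k, π r + π (-f - r) = 1 := by
  have h0 := min_pi_zero hm
  have hper := min_periodic hm
  have hsub := min_subadd hm
  have hle1 := min_le_one hm
  have hge := valid_sym_ge hm.1
  intro rb
  refine le_antisymm ?_ (hge rb)
  by_contra hgt
  push_neg at hgt
  set p := π rb with hp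
  set y := -f - rb with hy
  have hppos : 0 < p := by have := hle1 y; linarith
  obtain ⟨N₀, hN₀⟩ := exists_nat_gt (2 / p)
  set N : ℕ := N₀ + 1 with hN
  have hNpos : (0:ℝ) < (N:ℝ) := by positivity
  have hNge : (2:ℝ) / p ≤ (N:ℝ) := by
    have : (N₀:ℝ) ≤ (N:ℝ) := by exact_mod_cast Nat.le_succ N₀
    linarith
  have hinv : 1 / (N:ℝ) ≤ p / 2 := by
    rw [div_le_div_iff₀ hNpos (by norm_num : (0:ℝ) < 2)]
    have := (div_le_iff₀ hppos).mp hNge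
    nlinarith
  set ε := p + π y - 1 with hε
  have hεpos : 0 < ε := by simp only [hε]; linarith
  set δ := min (ε / N) (p - 1 / N) with hδ
  have hδpos : 0 < δ := lt_min (by positivity) (by linarith)
  have hδle₁ : δ ≤ ε / N := min_le_left _ _
  have hδle₂ : δ ≤ p - 1 / N := min_le_right _ _
  set InCl : Vec k → Prop := fun x => ∃ w : Fin k → ℤ, x = rb + intVec k w with hIn
  have hclval : ∀ x, InCl x → π x = p := by
    rintro x ⟨w, hw⟩; rw [hw, hper]
  have hclrb : InCl rb := ⟨0, by rw [intVec_zero, add_zero]⟩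
  set π' : Vec k → ℝ := fun x => if InCl x then p - δ else π x with hπ'
  have hπ'cl : ∀ x, InCl x → π' x = p - δ := fun x hx => by simp only [hπ', if_pos hx]
  have hπ'ncl : ∀ x, ¬ InCl x → π' x = π x := fun x hx => by simp only [hπ', if_neg hx]
  apply hm.2
  refine ⟨π', ⟨?_, ?_⟩, ?_, ?_⟩
  · intro r
    by_cases hr : InCl r
    · rw [hπ'cl r hr]; have : 1 / (N:ℝ) > 0 := by positivity
      linarith
    · rw [hπ'ncl r hr]; exact hm.1.1 r
  · intro s hs
    obtain ⟨w₀, hw₀⟩ := hs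
    set A := s.support.filter InCl with hA
    set B := s.support.filter (fun x => ¬ InCl x) with hB
    set n : ℕ := ∑ x ∈ A, s x with hn
    have hsplit : ∑ r ∈ s.support, π' r * (s r : ℝ) =
        ∑ r ∈ A, π' r * (s r : ℝ) + ∑ r ∈ B, π' r * (s r : ℝ) :=
      (Finset.sum_filter_add_sum_filter_not _ _ _).symm
    have hAval : ∑ r ∈ A, π' r * (s r : ℝ) = (p - δ) * (n : ℝ) := by
      rw [hn, Nat.cast_sum, Finset.mul_sum]
      refine Finset.sum_congr rfl fun x hx => ?_
      rw [hπ'cl x (Finset.mem_filter.mp hx).2]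
    have hBval : ∑ r ∈ B, π' r * (s r : ℝ) = ∑ r ∈ B, π r * (s r : ℝ) :=
      Finset.sum_congr rfl fun x hx => by rw [hπ'ncl x (Finset.mem_filter.mp hx).2]
    -- lattice decomposition of the A-part
    set wA : Vec k → (Fin k → ℤ) := fun x => if h : InCl x then Classical.choose h else 0
      with hwA
    have hxA : ∀ x ∈ A, x = rb + intVec k (wA x) := by
      intro x hx
      have hcl : InCl x := (Finset.mem_filter.mp hx).2
      rw [hwA]; simp only [dif_pos hcl]
      exact Classical.choose_spec hcl
    set W : Fin k → ℤ := ∑ x ∈ A, fun i => (s x : ℤ) * wA x i with hW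
    have hvA : ∑ x ∈ A, (s x : ℝ) • x = (n : ℝ) • rb + intVec k W := by
      rw [hW, intVec_sum]
      calc ∑ x ∈ A, (s x : ℝ) • x
          = ∑ x ∈ A, ((s x : ℝ) • rb + intVec k (fun i => (s x : ℤ) * wA x i)) := by
            refine Finset.sum_congr rfl fun x hx => ?_
            have e := hxA x hx
            calc (s x : ℝ) • x = (s x : ℝ) • (rb + intVec k (wA x)) := by rw [← e]
              _ = (s x : ℝ) • rb + (s x : ℝ) • intVec k (wA x) := smul_add _ _ _
              _ = (s x : ℝ) • rb + intVec k (fun i => (s x : ℤ) * wA x i) := by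
                  rw [smul_intVec]
        _ = (n : ℝ) • rb + ∑ x ∈ A, intVec k (fun i => (s x : ℤ) * wA x i) := by
            rw [Finset.sum_add_distrib, ← Finset.sum_smul, hn, Nat.cast_sum]
    set vB : Vec k := ∑ x ∈ B, (s x : ℝ) • x with hvB
    have hsuppsum : ∑ r ∈ s.support, (s r : ℝ) • r =
        ∑ x ∈ A, (s x : ℝ) • x + vB := (Finset.sum_filter_add_sum_filter_not _ _ _).symm
    have hvBeq : vB = (-f - (n : ℝ) • rb) + intVec k (w₀ - W) := by
      rw [hsuppsum, hvA] at hw₀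
      rw [intVec_sub]
      linear_combination (norm := module) hw₀
    have hπvB : π vB = π (-f - (n : ℝ) • rb) := by
      have := hper (-f - (n : ℝ) • rb) (w₀ - W)
      rw [← hvBeq] at this
      exact this
    have hBge : π vB ≤ ∑ r ∈ B, π r * (s r : ℝ) := pi_finsum_le h0 hsub B s
    have hc0 : 1 ≤ π (-f - (0 : ℝ) • rb) := by
      have h00 := hge 0
      rw [h0, zero_add, sub_zero] at h00
      rw [zero_smul, sub_zero]
      exact h00
    have hchain : ∀ m : ℕ, 1 ≤ m → 1 + ε ≤ π (-f - (m : ℝ) • rb) + (m : ℝ) * p := by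
      intro m hm1
      induction m with
      | zero => omega
      | succ j ih =>
        rcases Nat.eq_zero_or_pos j with hj | hj
        · subst hj
          have e1 : -f - ((0 + 1 : ℕ) : ℝ) • rb = y := by
            rw [hy]; push_cast; rw [one_smul]
          rw [e1]
          have : ((0 + 1 : ℕ) : ℝ) = 1 := by norm_num
          rw [this, one_mul, hε]
          linarith
        · have ihj := ih hj
          have estep : π (-f - (j : ℝ) • rb) ≤ π (-f - ((j + 1 : ℕ) : ℝ) • rb) + p := by
            have e2 : -f - (j : ℝ) • rb = (-f - ((j + 1 : ℕ) : ℝ) • rb) + rb := by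
              push_cast
              rw [add_smul, one_smul]
              abel
            rw [e2, hp]
            exact hsub _ _
          have ecast : ((j + 1 : ℕ) : ℝ) = (j : ℝ) + 1 := by push_cast; ring
          rw [ecast] at estep ⊢
          linarith
    rw [hπvB] at hBge
    have h6 : 0 ≤ π (-f - (n : ℝ) • rb) := hm.1.1 _
    clear hIn hwA hπ' hA hB hδ hε hy hp hN hvB hsuppsum hW hn hvA hw₀ hxA hclval hclrb
    clear hπvB hvBeq hinv hNge hN₀ hgt
    clear_value vB W wA n B A π' InCl δ ε N y p
    rw [hsplit, hAval, hBval]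
    rcases Nat.eq_zero_or_pos n with hn0 | hn1
    · subst hn0
      rw [Nat.cast_zero] at hBge ⊢
      rw [zero_smul, sub_zero] at hBge
      rw [zero_smul, sub_zero] at hc0
      linarith
    · by_cases hcase : n ≤ N
      · have hnN : (n : ℝ) ≤ (N : ℝ) := by exact_mod_cast hcase
        have h1a : (n : ℝ) * δ ≤ (N : ℝ) * δ :=
          mul_le_mul_of_nonneg_right hnN (le_of_lt hδpos)
        have h1b : (N : ℝ) * δ ≤ (N : ℝ) * (ε / N) :=
          mul_le_mul_of_nonneg_left hδle₁ (le_of_lt hNpos)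
        have hNδ : (N : ℝ) * (ε / N) = ε := by field_simp
        have h2 := hchain n hn1
        nlinarith
      · push_neg at hcase
        have hnN : (N : ℝ) < (n : ℝ) := by exact_mod_cast hcase
        have h3 : 1 / (N : ℝ) ≤ p - δ := by linarith
        have h4 : (1 / (N : ℝ)) * (n : ℝ) ≤ (p - δ) * (n : ℝ) :=
          mul_le_mul_of_nonneg_right h3 (by positivity)
        have h5 : (1 : ℝ) < (1 / (N : ℝ)) * (n : ℝ) := by
          rw [div_mul_eq_mul_div, one_mul, lt_div_iff₀ hNpos, one_mul]
          exact hnN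
        linarith
  · intro hcontra
    have := congrFun hcontra rb
    rw [hπ'cl rb hclrb, ← hp] at this
    linarith
  · intro r
    by_cases hr : InCl r
    · rw [hπ'cl r hr, hclval r hr]
      linarith
    · rw [hπ'ncl r hr]

lemma conds_minimal {f : Vec k} {π : Vec k → ℝ} (hnonneg : ∀ r, 0 ≤ π r) (h0 : π 0 = 0)
    (hper : ∀ (r : Vec k) (w : Fin k → ℤ), π (r + intVec k w) = π r)
    (hsub : ∀ a b : Vec k, π (a + b) ≤ π a + π b)
    (hsym : ∀ r : Vec k, π r + π (-f - r) = 1) : IsMinimal k f π := by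
  have hmf : π (-f) = 1 := by
    have := hsym 0
    rw [h0, sub_zero, zero_add] at this
    exact this
  have hvalid : IsValid k f π := by
    refine ⟨hnonneg, fun s hs => ?_⟩
    obtain ⟨w, hw⟩ := hs
    rw [vsum_def] at hw
    have h1 : π (vsum s) ≤ psum π s := pi_vsum_le h0 hsub s
    have h2 : vsum s = -f + intVec k w := by linear_combination (norm := module) hw
    have h3 : π (vsum s) = 1 := by rw [h2, hper (-f) w, hmf]
    rw [psum_def]
    linarith
  refine ⟨hvalid, ?_⟩
  rintro ⟨π', hv', hne, hle⟩
  apply hne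
  funext r
  have hge' := valid_sym_ge hv' r
  have h5 := hle (-f - r)
  have h6 := hsym r
  exact le_antisymm (hle r) (by linarith)

end GJ

/-- Gomory–Johnson characterization of minimal valid functions. -/
theorem statement2 (k : ℕ) (hk : 1 ≤ k) (f : Vec k) (π : Vec k → ℝ)
    (hnonneg : ∀ r, 0 ≤ π r) :
    IsMinimal k f π ↔
      (π 0 = 0 ∧
       (∀ (r : Vec k) (w : Fin k → ℤ), π (r + intVec k w) = π r) ∧
       (∀ a b : Vec k, π (a + b) ≤ π a + π b) ∧
       (∀ r : Vec k, π r + π (-f - r) = 1)) := by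
  constructor
  · intro hm
    exact ⟨GJ.min_pi_zero hm, GJ.min_periodic hm, GJ.min_subadd hm, GJ.min_sym hm⟩
  · rintro ⟨h0, hper, hsub, hsym⟩
    exact GJ.conds_minimal hnonneg h0 hper hsub hsym
end
end

section
/- (Facet Theorem) Let π be a minimal valid function. Suppose that for every minimal valid function π', E(π) ⊆ E(π') implies π' = π. Then π is a facet. -/
open scoped BigOperators

noncomputable section

section FacetAux

variable {k : ℕ}

/-- The value `∑ r, θ r * s r` of a valid-inequality candidate on a finsupp. -/
def wsum (θ : Vec k → ℝ) (s : Vec k →₀ ℕ) : ℝ := ∑ r ∈ s.support, θ r * (s r : ℝ)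

/-- The vector `∑ r, s r • r`. -/
def vsum (s : Vec k →₀ ℕ) : Vec k := ∑ r ∈ s.support, (s r : ℝ) • r

lemma wsum_def (θ : Vec k → ℝ) (s : Vec k →₀ ℕ) :
    wsum θ s = s.sum (fun r m => θ r * (m : ℝ)) := rfl

lemma vsum_def (s : Vec k →₀ ℕ) : vsum s = s.sum (fun r m => (m : ℝ) • r) := rfl

lemma wsum_add (θ : Vec k → ℝ) (s t : Vec k →₀ ℕ) :
    wsum θ (s + t) = wsum θ s + wsum θ t := by
  simp only [wsum_def]
  exact Finsupp.sum_add_index' (fun a => by simp) (fun a m n => by push_cast; ring)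

lemma vsum_add (s t : Vec k →₀ ℕ) : vsum (s + t) = vsum s + vsum t := by
  simp only [vsum_def]
  exact Finsupp.sum_add_index' (fun a => by simp) (fun a m n => by push_cast; rw [add_smul])

lemma wsum_single (θ : Vec k → ℝ) (a : Vec k) (m : ℕ) :
    wsum θ (Finsupp.single a m) = θ a * m := by
  simp only [wsum_def]
  exact Finsupp.sum_single_index (by simp)

lemma vsum_single (a : Vec k) (m : ℕ) :
    vsum (Finsupp.single a m) = (m : ℝ) • a := by
  simp only [vsum_def]
  exact Finsupp.sum_single_index (by simp)

lemma wsum_zero (θ : Vec k → ℝ) : wsum θ (0 : Vec k →₀ ℕ) = 0 := by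
  simp [wsum_def]

lemma vsum_zero : vsum (0 : Vec k →₀ ℕ) = 0 := by
  simp [vsum_def]

lemma wsum_nonneg {θ : Vec k → ℝ} (hθ : ∀ r, 0 ≤ θ r) (s : Vec k →₀ ℕ) : 0 ≤ wsum θ s :=
  Finset.sum_nonneg fun r _ => mul_nonneg (hθ r) (Nat.cast_nonneg _)

lemma wsum_congr {θ θ' : Vec k → ℝ} (s : Vec k →₀ ℕ)
    (h : ∀ r ∈ s.support, θ r = θ' r) : wsum θ s = wsum θ' s :=
  Finset.sum_congr rfl fun r hr => by rw [h r hr]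

lemma wsum_erase (θ : Vec k → ℝ) (s : Vec k →₀ ℕ) (z : Vec k) :
    wsum θ s = wsum θ (s.erase z) + θ z * (s z : ℝ) := by
  conv_lhs => rw [← Finsupp.erase_add_single z s]
  rw [wsum_add, wsum_single]

lemma vsum_erase (s : Vec k →₀ ℕ) (z : Vec k) :
    vsum s = vsum (s.erase z) + (s z : ℝ) • z := by
  conv_lhs => rw [← Finsupp.erase_add_single z s]
  rw [vsum_add, vsum_single]

lemma wsum_pair (θ : Vec k → ℝ) (a b : Vec k) :
    wsum θ (Finsupp.single a 1 + Finsupp.single b 1) = θ a + θ b := by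
  rw [wsum_add, wsum_single, wsum_single]
  push_cast; ring

lemma wsum_triple (θ : Vec k → ℝ) (a b c : Vec k) :
    wsum θ (Finsupp.single a 1 + Finsupp.single b 1 + Finsupp.single c 1)
      = θ a + θ b + θ c := by
  rw [wsum_add, wsum_pair, wsum_single]
  push_cast; ring

lemma wsum_avg (θ θ' : Vec k → ℝ) (s : Vec k →₀ ℕ) :
    wsum (fun r => (θ r + θ' r) / 2) s = (wsum θ s + wsum θ' s) / 2 := by
  simp only [wsum]
  rw [← Finset.sum_add_distrib, Finset.sum_div]
  exact Finset.sum_congr rfl fun r _ => by ring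

lemma intVec_zero : intVec k 0 = 0 := by
  ext i; simp [intVec]

lemma intVec_neg (w : Fin k → ℤ) : intVec k (-w) = - intVec k w := by
  ext i; simp [intVec]

lemma intVec_add (w w' : Fin k → ℤ) : intVec k (w + w') = intVec k w + intVec k w' := by
  ext i; simp [intVec]

lemma intVec_nsmul (n : ℕ) (w : Fin k → ℤ) :
    (n : ℝ) • intVec k w = intVec k ((n : ℤ) • w) := by
  ext i
  simp [intVec]

lemma feas_def (f : Vec k) (s : Vec k →₀ ℕ) :
    IsFeasible k f s ↔ ∃ w : Fin k → ℤ, f + vsum s = intVec k w := Iff.rfl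

lemma pair_feas (f : Vec k) (r : Vec k) :
    IsFeasible k f (Finsupp.single r 1 + Finsupp.single (-f - r) 1) := by
  refine ⟨0, ?_⟩
  show f + vsum _ = _
  rw [vsum_add, vsum_single, vsum_single, intVec_zero]
  push_cast
  simp only [one_smul]
  abel

lemma triple_feas (f : Vec k) (u v : Vec k) :
    IsFeasible k f (Finsupp.single u 1 + Finsupp.single v 1
      + Finsupp.single (-f - (u + v)) 1) := by
  refine ⟨0, ?_⟩
  show f + vsum _ = _
  rw [vsum_add, vsum_add, vsum_single, vsum_single, vsum_single, intVec_zero]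
  push_cast
  simp only [one_smul]
  abel

lemma feas_erase_int {f : Vec k} {s : Vec k →₀ ℕ} (hs : IsFeasible k f s) (w : Fin k → ℤ) :
    IsFeasible k f (s.erase (intVec k w)) := by
  obtain ⟨w', hw'⟩ := hs
  refine ⟨w' - (s (intVec k w) : ℤ) • w, ?_⟩
  have h1 : f + vsum s = intVec k w' := hw'
  rw [vsum_erase s (intVec k w)] at h1
  show f + vsum _ = _
  have h2 : f + vsum (s.erase (intVec k w))
      = intVec k w' - ((s (intVec k w) : ℕ) : ℝ) • intVec k w := by
    rw [← h1]; abel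
  rw [h2, intVec_nsmul]
  have h3 : intVec k w' - intVec k ((s (intVec k w) : ℤ) • w)
      = intVec k w' + intVec k (-((s (intVec k w) : ℤ) • w)) := by
    rw [intVec_neg]; abel
  rw [h3, ← intVec_add, sub_eq_add_neg]

lemma minimal_point_le {f : Vec k} {π : Vec k → ℝ} (hmin : IsMinimal k f π)
    (z : Vec k) (c : ℝ) (hc : 0 ≤ c)
    (hbound : ∀ s : Vec k →₀ ℕ, IsFeasible k f s →
      1 ≤ wsum π (s.erase z) + c * (s z : ℝ)) : π z ≤ c := by
  classical
  by_contra hcon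
  push_neg at hcon
  apply hmin.2
  refine ⟨fun x => if x = z then c else π x, ⟨?_, ?_⟩, ?_, ?_⟩
  · intro r; dsimp only
    split
    · exact hc
    · exact hmin.1.1 r
  · intro s hs
    show 1 ≤ wsum (fun x => if x = z then c else π x) s
    have h1 : wsum (fun x => if x = z then c else π x) s
        = wsum π (s.erase z) + c * (s z : ℝ) := by
      rw [wsum_erase (fun x => if x = z then c else π x) s z]
      simp only [if_pos rfl]
      congr 1
      refine wsum_congr _ fun r hr => ?_
      rw [Finsupp.support_erase] at hr
      exact if_neg (Finset.ne_of_mem_erase hr)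
    rw [h1]
    exact hbound s hs
  · intro heq
    have h2 := congrFun heq z
    simp only [if_pos] at h2
    linarith
  · intro r; dsimp only
    split
    · rename_i hr; subst hr; linarith
    · exact le_rfl

lemma minimal_int_zero {f : Vec k} {π : Vec k → ℝ} (hmin : IsMinimal k f π)
    (w : Fin k → ℤ) : π (intVec k w) = 0 := by
  refine le_antisymm ?_ (hmin.1.1 _)
  refine minimal_point_le hmin _ 0 le_rfl ?_
  intro s hs
  have h1 : 1 ≤ wsum π (s.erase (intVec k w)) := hmin.1.2 _ (feas_erase_int hs w)
  linarith

lemma minimal_zero {f : Vec k} {π : Vec k → ℝ} (hmin : IsMinimal k f π) : π 0 = 0 := by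
  have := minimal_int_zero hmin 0
  rwa [intVec_zero] at this

lemma minimal_subadd {f : Vec k} {π : Vec k → ℝ} (hmin : IsMinimal k f π)
    (u v : Vec k) : π (u + v) ≤ π u + π v := by
  refine minimal_point_le hmin (u + v) _ (add_nonneg (hmin.1.1 u) (hmin.1.1 v)) ?_
  intro s hs
  obtain ⟨w, hw⟩ := hs
  set m := s (u + v) with hm
  set e := s.erase (u + v) with he
  have hfeas : IsFeasible k f (e + Finsupp.single u m + Finsupp.single v m) := by
    refine ⟨w, ?_⟩
    show f + vsum _ = _
    rw [vsum_add, vsum_add, vsum_single, vsum_single]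
    have h1 : f + vsum s = intVec k w := hw
    rw [vsum_erase s (u + v)] at h1
    rw [← h1, smul_add]
    abel
  have h2 : 1 ≤ wsum π (e + Finsupp.single u m + Finsupp.single v m) := hmin.1.2 _ hfeas
  rw [wsum_add, wsum_add, wsum_single, wsum_single] at h2
  linarith [h2]

lemma minimal_le_one {f : Vec k} {π : Vec k → ℝ} (hmin : IsMinimal k f π)
    (r : Vec k) : π r ≤ 1 := by
  have key : π r ≤ min (π r) 1 := by
    refine minimal_point_le hmin r (min (π r) 1) (le_min (hmin.1.1 r) zero_le_one) ?_
    intro s hs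
    rcases Nat.eq_zero_or_pos (s r) with h0 | hpos
    · have hes : s.erase r = s :=
        Finsupp.erase_of_notMem_support (Finsupp.notMem_support_iff.mpr h0)
      rw [hes, h0]
      simp only [Nat.cast_zero, mul_zero, add_zero]
      exact hmin.1.2 s hs
    · rcases min_cases (π r) 1 with ⟨hmeq, _⟩ | ⟨hmeq, _⟩
      · rw [hmeq, ← wsum_erase]
        exact hmin.1.2 s hs
      · rw [hmeq]
        have h1 : (1 : ℝ) ≤ (s r : ℝ) := by exact_mod_cast hpos
        have h2 : 0 ≤ wsum π (s.erase r) := wsum_nonneg hmin.1.1 _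
        linarith
  exact key.trans (min_le_right _ _)

lemma minimal_periodic {f : Vec k} {π : Vec k → ℝ} (hmin : IsMinimal k f π)
    (x : Vec k) (w : Fin k → ℤ) : π (x + intVec k w) = π x := by
  have h1 := minimal_subadd hmin x (intVec k w)
  have h2 := minimal_subadd hmin (x + intVec k w) (intVec k (-w))
  have h3 : x + intVec k w + intVec k (-w) = x := by
    rw [intVec_neg]; abel
  rw [minimal_int_zero hmin w] at h1
  rw [minimal_int_zero hmin (-w), h3] at h2
  linarith

lemma minimal_nsmul_le {f : Vec k} {π : Vec k → ℝ} (hmin : IsMinimal k f π)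
    (x v : Vec k) : ∀ n : ℕ, π (x + (n : ℝ) • v) ≤ π x + n * π v := by
  intro n
  induction n with
  | zero => simp
  | succ n ih =>
    have h1 : x + ((n + 1 : ℕ) : ℝ) • v = (x + (n : ℝ) • v) + v := by
      push_cast
      rw [add_smul, one_smul]
      abel
    rw [h1]
    have h2 := minimal_subadd hmin (x + (n : ℝ) • v) v
    push_cast
    linarith

lemma minimal_super {f : Vec k} {π : Vec k → ℝ} (hmin : IsMinimal k f π)
    (t : Vec k →₀ ℕ) : π (vsum t) ≤ wsum π t := by
  induction t using Finsupp.induction with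
  | zero =>
    rw [vsum_zero, wsum_zero, minimal_zero hmin]
  | single_add a b g hag hb ih =>
    rw [vsum_add, wsum_add, vsum_single, wsum_single]
    have h1 : π ((b : ℝ) • a + vsum g) = π (vsum g + (b : ℝ) • a) := by rw [add_comm]
    have h2 := minimal_nsmul_le hmin (vsum g) a b
    rw [h1]
    nlinarith [h2, ih]

lemma minimal_sym {f : Vec k} {π : Vec k → ℝ} (hmin : IsMinimal k f π)
    (r : Vec k) : π r + π (-f - r) = 1 := by
  have hge : 1 ≤ π r + π (-f - r) := by
    have h1 : 1 ≤ wsum π (Finsupp.single r 1 + Finsupp.single (-f - r) 1) :=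
      hmin.1.2 _ (pair_feas f r)
    rwa [wsum_pair] at h1
  by_contra hne
  have hgt : 1 < π r + π (-f - r) := lt_of_le_of_ne hge fun h => hne h.symm
  set δ : ℝ := π r + π (-f - r) - 1 with hδ
  have hδpos : 0 < δ := by simp only [hδ]; linarith
  have hc1 : π (-f - r) ≤ 1 := minimal_le_one hmin _
  have hrpos : 0 < π r := by linarith
  set M : ℕ := ⌈(2 : ℝ) / π r⌉₊ with hM
  have hMpos : 0 < M := Nat.ceil_pos.mpr (by positivity)
  have hM2 : 2 ≤ (M : ℝ) * π r := by
    have hle := Nat.le_ceil ((2 : ℝ) / π r)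
    have := mul_le_mul_of_nonneg_right hle hrpos.le
    rwa [div_mul_cancel₀] at this
    exact hrpos.ne'
  set ε : ℝ := min (π r / 2) (δ / M) with hε
  have hεpos : 0 < ε := lt_min (by linarith) (by positivity)
  have hεle1 : ε ≤ π r / 2 := min_le_left _ _
  have hεle2 : ε ≤ δ / M := min_le_right _ _
  have hkey : π r ≤ π r - ε := by
    refine minimal_point_le hmin r (π r - ε) (by linarith) ?_
    intro s hs
    obtain ⟨w, hw⟩ := hs
    set m := s r with hm
    set e := s.erase r with he
    have hsum : f + (vsum e + (m : ℝ) • r) = intVec k w := by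
      rw [← vsum_erase]; exact hw
    have hsup : π (vsum e) ≤ wsum π e := minimal_super hmin e
    rcases Nat.eq_zero_or_pos m with h0 | hpos
    · have hes : e = s :=
        Finsupp.erase_of_notMem_support (Finsupp.notMem_support_iff.mpr h0)
      rw [h0]
      simp only [Nat.cast_zero, mul_zero, add_zero]
      rw [hes]
      exact hmin.1.2 s ⟨w, hw⟩
    · have hm1 : (1 : ℝ) ≤ (m : ℝ) := by exact_mod_cast hpos
      rcases le_total (m : ℝ) (M : ℝ) with hmM | hmM
      · -- small multiplicity
        have hcast : ((m - 1 : ℕ) : ℝ) = (m : ℝ) - 1 := by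
          have : 1 ≤ m := hpos
          push_cast [this]
          ring
        have hve : vsum e = intVec k w - f - (m : ℝ) • r := by
          rw [← hsum]; abel
        have hrep : vsum e + ((m - 1 : ℕ) : ℝ) • r = (-f - r) + intVec k w := by
          rw [hcast, hve, sub_smul, one_smul]
          abel
        have hper : π (vsum e + ((m - 1 : ℕ) : ℝ) • r) = π (-f - r) := by
          rw [hrep]
          exact minimal_periodic hmin _ w
        have hb : π (-f - r) ≤ π (vsum e) + ((m - 1 : ℕ) : ℝ) * π r := by
          rw [← hper]
          exact minimal_nsmul_le hmin _ _ _
        rw [hcast] at hb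
        have hme : (m : ℝ) * ε ≤ δ := by
          have h4 : (m : ℝ) * ε ≤ (M : ℝ) * (δ / M) := by
            apply mul_le_mul hmM hεle2 hεpos.le (Nat.cast_nonneg _)
          have h5 : (M : ℝ) * (δ / M) = δ := by
            field_simp
          linarith
        nlinarith [hsup, hb, hme, hm1]
      · -- large multiplicity
        have h1 : 0 ≤ wsum π e := wsum_nonneg hmin.1.1 e
        have h2 : π r / 2 ≤ π r - ε := by linarith
        have h3 : (1 : ℝ) ≤ (m : ℝ) * (π r / 2) := by
          nlinarith
        nlinarith
  linarith

lemma sym_min {f : Vec k} {θ : Vec k → ℝ} (hval : IsValid k f θ)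
    (hsym : ∀ r, θ r + θ (-f - r) = 1) : IsMinimal k f θ := by
  refine ⟨hval, ?_⟩
  rintro ⟨ρ, hρ, hne, hle⟩
  apply hne
  funext r
  refine le_antisymm (hle r) ?_
  by_contra hlt
  push_neg at hlt
  have h1 : 1 ≤ wsum ρ (Finsupp.single r 1 + Finsupp.single (-f - r) 1) :=
    hρ.2 _ (pair_feas f r)
  rw [wsum_pair] at h1
  have h2 := hle (-f - r)
  have h3 := hsym r
  linarith

end FacetAux

/-- Facet Theorem: if every minimal valid function `π'` with `E(π) ⊆ E(π')` equals `π`,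
then `π` is a facet. -/
theorem statement4 (k : ℕ) (hk : 1 ≤ k) (f : Vec k) (π : Vec k → ℝ)
    (hmin : IsMinimal k f π)
    (h : ∀ π' : Vec k → ℝ, IsMinimal k f π' → Eadd k π ⊆ Eadd k π' → π' = π) :
    IsFacet k f π := by
  classical
  obtain ⟨hval, -⟩ := id hmin
  refine ⟨hval, ?_⟩
  intro π' hval' hS
  have hsym : ∀ r, π r + π (-f - r) = 1 := minimal_sym hmin
  have hpair_mem : ∀ r, (Finsupp.single r 1 + Finsupp.single (-f - r) 1) ∈ Ssol k f π := by
    intro r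
    refine ⟨pair_feas f r, ?_⟩
    show wsum π _ = 1
    rw [wsum_pair]
    exact hsym r
  have hsym' : ∀ r, π' r + π' (-f - r) = 1 := by
    intro r
    have hmem := hS (hpair_mem r)
    have h2 : wsum π' (Finsupp.single r 1 + Finsupp.single (-f - r) 1) = 1 := hmem.2
    rwa [wsum_pair] at h2
  set π'' : Vec k → ℝ := fun r => (π r + π' r) / 2 with hπ''
  have hval'' : IsValid k f π'' := by
    constructor
    · intro r
      have := hval.1 r
      have := hval'.1 r
      simp only [hπ'']
      linarith
    · intro s hs
      have hA : 1 ≤ wsum π s := hval.2 s hs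
      have hB : 1 ≤ wsum π' s := hval'.2 s hs
      show 1 ≤ wsum π'' s
      rw [hπ'', wsum_avg]
      linarith
  have hsym'' : ∀ r, π'' r + π'' (-f - r) = 1 := by
    intro r
    simp only [hπ'']
    have := hsym r
    have := hsym' r
    linarith
  have hmin'' : IsMinimal k f π'' := sym_min hval'' hsym''
  have hE : Eadd k π ⊆ Eadd k π'' := by
    rintro ⟨u, v⟩ huv
    have huv' : π (u + v) = π u + π v := huv
    have htrip : (Finsupp.single u 1 + Finsupp.single v 1
        + Finsupp.single (-f - (u + v)) 1) ∈ Ssol k f π := by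
      refine ⟨triple_feas f u v, ?_⟩
      show wsum π _ = 1
      rw [wsum_triple]
      have := hsym (u + v)
      linarith
    have h1 : wsum π' (Finsupp.single u 1 + Finsupp.single v 1
        + Finsupp.single (-f - (u + v)) 1) = 1 := (hS htrip).2
    have h2 : wsum π' (Finsupp.single (u + v) 1
        + Finsupp.single (-f - (u + v)) 1) = 1 := (hS (hpair_mem (u + v))).2
    rw [wsum_triple] at h1
    rw [wsum_pair] at h2
    show π'' (u + v) = π'' u + π'' v
    simp only [hπ'']
    linarith
  have hfin := h π'' hmin'' hE
  funext r
  have h4 := congrFun hfin r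
  simp only [hπ''] at h4
  linarith
end
end

section
/- Let k ≥ 1 and let r^1, …, r^{k+1} ∈ ℝ^k be such that cone(r^1, …, r^{k+1}) = ℝ^k. Then for every index i ∈ {1, …, k+1}, the family (r^j)_{j ≠ i} is linearly independent (hence every proper subset of {r^1, …, r^{k+1}} is linearly independent). -/
open scoped BigOperators

noncomputable section

/-- If k+1 vectors positively span `ℝ^k`, every proper subfamily is linearly
independent. -/
theorem statement6 (k : ℕ) (hk : 1 ≤ k) (r : Fin (k + 1) → Vec k)
    (h : coneOf r = Set.univ) (i : Fin (k + 1)) :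
    LinearIndependent ℝ (fun j : {j : Fin (k + 1) // j ≠ i} => r j) := by
  set W : Submodule ℝ (Vec k) :=
    Submodule.span ℝ (Set.range (fun j : {j : Fin (k + 1) // j ≠ i} => r j)) with hW
  have hWtop : W = ⊤ := by
    by_contra hne
    have hbot : Wᗮ ≠ ⊥ := fun hb => hne (Submodule.orthogonal_eq_bot_iff.mp hb)
    obtain ⟨v, hvW, hv0⟩ := Submodule.exists_mem_ne_zero_of_ne_bot hbot
    have hmem : ∀ j : Fin (k+1), j ≠ i → (inner ℝ v (r j) : ℝ) = 0 := by
      intro j hj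
      have : r j ∈ W := Submodule.subset_span ⟨⟨j, hj⟩, rfl⟩
      have := (Submodule.mem_orthogonal W v).mp hvW (r j) this
      rw [real_inner_comm] at this; exact this
    have key : ∀ x : Vec k, ∃ t : ℝ, 0 ≤ t ∧ (inner ℝ v x : ℝ) = t * (inner ℝ v (r i) : ℝ) := by
      intro x
      have hx : x ∈ coneOf r := by rw [h]; trivial
      obtain ⟨lam, hlam, hxe⟩ := hx
      refine ⟨lam i, hlam i, ?_⟩
      rw [hxe, inner_sum]
      rw [Finset.sum_eq_single i]
      · rw [real_inner_smul_right]
      · intro j _ hj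
        rw [real_inner_smul_right, hmem j hj, mul_zero]
      · intro hni; exact absurd (Finset.mem_univ i) hni
    obtain ⟨t, ht, hte⟩ := key v
    obtain ⟨s, hs, hse⟩ := key (-v)
    rw [real_inner_self_eq_norm_sq] at hte
    rw [inner_neg_right, real_inner_self_eq_norm_sq] at hse
    have hvpos : 0 < ‖v‖^2 := by have := norm_pos_iff.mpr hv0; positivity
    have h1 : s * (‖v‖^2) = -(t * ‖v‖^2) := by
      calc s * ‖v‖^2 = t * (s * (inner ℝ v (r i) : ℝ)) := by rw [hte]; ring
      _ = t * (-‖v‖^2) := by rw [← hse]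
      _ = -(t * ‖v‖^2) := by ring
    have h2 : t * ‖v‖^2 = 0 := by
      nlinarith [mul_nonneg hs hvpos.le, mul_nonneg ht hvpos.le]
    have h3 : t = 0 := by
      rcases mul_eq_zero.mp h2 with h | h
      · exact h
      · exact absurd h hvpos.ne'
    rw [h3, zero_mul] at hte
    linarith
  refine linearIndependent_of_top_le_span_of_card_eq_finrank (le_of_eq hWtop.symm) ?_
  simp [finrank_euclideanSpace_fin]
end
end

section
/- Let k ≥ 1 and let {a^1, …, a^{k+1}} and {b^1, …, b^{k+1}} be two sets of k+1 vectors in ℝ^k. Suppose cone(a^1, …, a^{k+1}) = ℝ^k and a^i · b^j < 0 for all i ≠ j. Then cone(b^1, …, b^{k+1}) = ℝ^k. -/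
open scoped BigOperators

noncomputable section

/-- If `cone(a) = ℝ^k` and `a_i · b_j < 0` for `i ≠ j`, then `cone(b) = ℝ^k`. -/
theorem statement7 (k : ℕ) (hk : 1 ≤ k) (a b : Fin (k + 1) → Vec k)
    (ha : coneOf a = Set.univ)
    (hab : ∀ i j, i ≠ j → (inner ℝ (a i) (b j) : ℝ) < 0) :
    coneOf b = Set.univ := by
  classical
  have hmem : ∀ x : Vec k, ∃ lam : Fin (k+1) → ℝ, (∀ i, 0 ≤ lam i) ∧ x = ∑ i, lam i • a i :=
    fun x => Set.eq_univ_iff_forall.mp ha x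
  have hcard : 1 < Fintype.card (Fin (k+1)) := by simp; omega
  -- strictly positive relation among the a's
  obtain ⟨ν, hν0, hνsum⟩ := hmem (-(∑ i, a i))
  set lam : Fin (k+1) → ℝ := fun i => 1 + ν i with hlam_def
  have hlam_pos : ∀ i, 0 < lam i := fun i => by
    have := hν0 i; simp only [hlam_def]; linarith
  have hlam_sum : ∑ i, lam i • a i = 0 := by
    have h : ∑ i, lam i • a i = (∑ i, a i) + ∑ i, ν i • a i := by
      rw [← Finset.sum_add_distrib]
      refine Finset.sum_congr rfl fun i _ => by
        simp [hlam_def, add_smul]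
    rw [h, ← hνsum]; abel
  -- a spans (in the form of a perp-triviality statement)
  have ha_span : ∀ w : Vec k, (∀ i, (inner ℝ (a i) w : ℝ) = 0) → w = 0 := by
    intro w hw
    obtain ⟨μ, hμ0, hμ⟩ := hmem w
    have h0 : (inner ℝ w w : ℝ) = 0 := by
      nth_rewrite 1 [hμ]
      rw [sum_inner]
      exact Finset.sum_eq_zero fun i _ => by rw [real_inner_smul_left, hw i, mul_zero]
    exact inner_self_eq_zero.mp h0
  set m : Fin (k+1) → Fin (k+1) → ℝ := fun i j => (inner ℝ (a i) (b j) : ℝ) with hm_def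
  have hm_neg : ∀ i j, i ≠ j → m i j < 0 := fun i j h => hab i j h
  -- lamᵀ M = 0
  have hlamM : ∀ j, ∑ i, lam i * m i j = 0 := by
    intro j
    have h : (inner ℝ (∑ i, lam i • a i) (b j) : ℝ) = 0 := by rw [hlam_sum, inner_zero_left]
    rw [sum_inner] at h
    calc ∑ i, lam i * m i j = ∑ i, (inner ℝ (lam i • a i) (b j) : ℝ) :=
          Finset.sum_congr rfl fun i _ => (real_inner_smul_left _ _ _).symm
      _ = 0 := h
  -- diagonal entries positive
  have hm_diag : ∀ j, 0 < m j j := by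
    intro j
    have hsplit : lam j * m j j + ∑ i ∈ Finset.univ.erase j, lam i * m i j
        = ∑ i, lam i * m i j :=
      Finset.add_sum_erase Finset.univ (fun i => lam i * m i j) (Finset.mem_univ j)
    obtain ⟨i₀, hi₀⟩ := Fintype.exists_ne_of_one_lt_card hcard j
    have hne : (Finset.univ.erase j).Nonempty := ⟨i₀, Finset.mem_erase.mpr ⟨hi₀, Finset.mem_univ _⟩⟩
    have hneg : ∑ i ∈ Finset.univ.erase j, lam i * m i j < 0 := by
      have h2 := Finset.sum_lt_sum_of_nonempty hne
        (f := fun i => lam i * m i j) (g := fun _ => (0:ℝ)) ?_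
      · simpa using h2
      · intro i hi
        exact mul_neg_of_pos_of_neg (hlam_pos i) (hm_neg i j (Finset.mem_erase.mp hi).1)
    have hj0 : 0 < lam j * m j j := by
      have h3 := hlamM j; rw [← hsplit] at h3; linarith
    nlinarith [hlam_pos j]
  -- the orthogonal complement of the span of b is trivial
  have hb_perp : ∀ y : Vec k, (∀ j, (inner ℝ (b j) y : ℝ) = 0) → y = 0 := by
    intro y hy
    obtain ⟨μ, hμ0, hμ⟩ := hmem y
    have hcol : ∀ j, ∑ i, μ i * m i j = 0 := by
      intro j
      have h : (inner ℝ (∑ i, μ i • a i) (b j) : ℝ) = 0 := by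
        rw [← hμ, real_inner_comm]; exact hy j
      rw [sum_inner] at h
      calc ∑ i, μ i * m i j = ∑ i, (inner ℝ (μ i • a i) (b j) : ℝ) :=
            Finset.sum_congr rfl fun i _ => (real_inner_smul_left _ _ _).symm
        _ = 0 := h
    obtain ⟨i₀, _, hmin⟩ := Finset.exists_min_image Finset.univ (fun i => μ i / lam i)
      ⟨0, Finset.mem_univ 0⟩
    set t : ℝ := μ i₀ / lam i₀ with ht_def
    set μ' : Fin (k+1) → ℝ := fun i => μ i - t * lam i with hμ'_def
    have hμ'0 : ∀ i, 0 ≤ μ' i := by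
      intro i
      have h1 : t ≤ μ i / lam i := hmin i (Finset.mem_univ i)
      have h2 : t * lam i ≤ μ i := (le_div_iff₀ (hlam_pos i)).mp h1
      simp only [hμ'_def]; linarith
    have htl : t * lam i₀ = μ i₀ := div_mul_cancel₀ _ (ne_of_gt (hlam_pos i₀))
    have hμ'i₀ : μ' i₀ = 0 := by simp only [hμ'_def]; linarith
    have hcol' : ∑ i, μ' i * m i i₀ = 0 := by
      have h4 : ∑ i, μ' i * m i i₀ = ∑ i, μ i * m i i₀ - t * ∑ i, lam i * m i i₀ := by
        rw [Finset.mul_sum, ← Finset.sum_sub_distrib]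
        exact Finset.sum_congr rfl fun i _ => by simp only [hμ'_def]; ring
      rw [h4, hcol i₀, hlamM i₀]; ring
    have hall : ∀ i, μ' i * m i i₀ = 0 := by
      have hnp : ∀ i ∈ Finset.univ, μ' i * m i i₀ ≤ 0 := by
        intro i _
        by_cases hii : i = i₀
        · rw [hii, hμ'i₀]; simp
        · exact mul_nonpos_of_nonneg_of_nonpos (hμ'0 i) (le_of_lt (hm_neg i i₀ hii))
      intro i
      exact (Finset.sum_eq_zero_iff_of_nonpos hnp).mp hcol' i (Finset.mem_univ i)
    have hμeq : ∀ i, μ i = t * lam i := by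
      intro i
      by_cases hii : i = i₀
      · rw [hii]; linarith
      · have h := hall i
        have hmne : m i i₀ ≠ 0 := ne_of_lt (hm_neg i i₀ hii)
        have h5 : μ' i = 0 := by
          rcases mul_eq_zero.mp h with h' | h'
          · exact h'
          · exact absurd h' hmne
        simp only [hμ'_def] at h5; linarith
    rw [hμ]
    have h6 : ∑ i, μ i • a i = t • ∑ i, lam i • a i := by
      rw [Finset.smul_sum]
      exact Finset.sum_congr rfl fun i _ => by rw [hμeq i, smul_smul]
    rw [h6, hlam_sum, smul_zero]
  -- a nonzero linear relation among the b's
  have hdep : ¬ LinearIndependent ℝ b := by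
    intro h
    have hc := h.fintype_card_le_finrank
    rw [finrank_euclideanSpace_fin, Fintype.card_fin] at hc
    omega
  obtain ⟨g, hg_sum, j₁, hgj₁⟩ := Fintype.not_linearIndependent_iff.mp hdep
  -- M g = 0 (rows)
  have hMg : ∀ i, ∑ j, m i j * g j = 0 := by
    intro i
    have h : (inner ℝ (a i) (∑ j, g j • b j) : ℝ) = 0 := by rw [hg_sum, inner_zero_right]
    rw [inner_sum] at h
    calc ∑ j, m i j * g j = ∑ j, (inner ℝ (a i) (g j • b j) : ℝ) :=
          Finset.sum_congr rfl fun j _ => by rw [real_inner_smul_right]; ring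
      _ = 0 := h
  -- rows applied to |g| are ≤ 0
  have hrow_le : ∀ i, ∑ j, m i j * |g j| ≤ 0 := by
    intro i
    have hsplit : m i i * g i + ∑ j ∈ Finset.univ.erase i, m i j * g j
        = ∑ j, m i j * g j :=
      Finset.add_sum_erase Finset.univ (fun j => m i j * g j) (Finset.mem_univ i)
    have hsplit2 : m i i * |g i| + ∑ j ∈ Finset.univ.erase i, m i j * |g j|
        = ∑ j, m i j * |g j| :=
      Finset.add_sum_erase Finset.univ (fun j => m i j * |g j|) (Finset.mem_univ i)
    have heq : m i i * g i = ∑ j ∈ Finset.univ.erase i, (-(m i j)) * g j := by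
      have h7 := hMg i
      rw [← hsplit] at h7
      have : ∑ j ∈ Finset.univ.erase i, -m i j * g j
          = - ∑ j ∈ Finset.univ.erase i, m i j * g j := by
        rw [← Finset.sum_neg_distrib]
        exact Finset.sum_congr rfl fun j _ => by ring
      rw [this]; linarith
    have habs : m i i * |g i| ≤ ∑ j ∈ Finset.univ.erase i, (-(m i j)) * |g j| := by
      have h8 : m i i * |g i| = |m i i * g i| := by
        rw [abs_mul, abs_of_pos (hm_diag i)]
      rw [h8, heq]
      refine le_trans (Finset.abs_sum_le_sum_abs _ _) ?_
      refine Finset.sum_le_sum fun j hj => ?_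
      rw [abs_mul, abs_of_pos]
      · exact neg_pos.mpr (hm_neg i j (Finset.mem_erase.mp hj).1.symm)
    have h9 : ∑ j ∈ Finset.univ.erase i, (-(m i j)) * |g j|
        = - ∑ j ∈ Finset.univ.erase i, m i j * |g j| := by
      rw [← Finset.sum_neg_distrib]
      exact Finset.sum_congr rfl fun j _ => by ring
    rw [h9] at habs
    linarith [hsplit2]
  -- rows applied to |g| are in fact = 0
  have hrow0 : ∀ i, ∑ j, m i j * |g j| = 0 := by
    have hswap : ∑ i, lam i * ∑ j, m i j * |g j|
        = ∑ j, (∑ i, lam i * m i j) * |g j| := by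
      calc ∑ i, lam i * ∑ j, m i j * |g j|
          = ∑ i, ∑ j, lam i * m i j * |g j| := Finset.sum_congr rfl fun i _ => by
            rw [Finset.mul_sum]
            exact Finset.sum_congr rfl fun j _ => by ring
        _ = ∑ j, ∑ i, lam i * m i j * |g j| := Finset.sum_comm
        _ = ∑ j, (∑ i, lam i * m i j) * |g j| := Finset.sum_congr rfl fun j _ =>
            (Finset.sum_mul _ _ _).symm
    have htot : ∑ i, lam i * (∑ j, m i j * |g j|) = 0 := by
      rw [hswap]
      exact Finset.sum_eq_zero fun j _ => by rw [hlamM j, zero_mul]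
    have hnp : ∀ i ∈ Finset.univ, lam i * (∑ j, m i j * |g j|) ≤ 0 := fun i _ =>
      mul_nonpos_of_nonneg_of_nonpos (le_of_lt (hlam_pos i)) (hrow_le i)
    intro i
    have h10 := (Finset.sum_eq_zero_iff_of_nonpos hnp).mp htot i (Finset.mem_univ i)
    rcases mul_eq_zero.mp h10 with h' | h'
    · exact absurd h' (ne_of_gt (hlam_pos i))
    · exact h'
  -- |g| is strictly positive
  have habs_pos : ∀ j, 0 < |g j| := by
    intro i
    by_cases hij : i = j₁
    · rw [hij]; exact abs_pos.mpr hgj₁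
    · have hsplit2 : m i i * |g i| + ∑ j ∈ Finset.univ.erase i, m i j * |g j|
          = ∑ j, m i j * |g j| :=
        Finset.add_sum_erase Finset.univ (fun j => m i j * |g j|) (Finset.mem_univ i)
      have hmemj₁ : j₁ ∈ Finset.univ.erase i :=
        Finset.mem_erase.mpr ⟨fun h => hij h.symm, Finset.mem_univ _⟩
      have hsingle : (-(m i j₁)) * |g j₁| ≤ ∑ j ∈ Finset.univ.erase i, (-(m i j)) * |g j| :=
        Finset.single_le_sum (f := fun j => (-(m i j)) * |g j|)
          (fun j hj => mul_nonneg
            (le_of_lt (neg_pos.mpr (hm_neg i j (Finset.mem_erase.mp hj).1.symm)))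
            (abs_nonneg _)) hmemj₁
      have hsum_eq : ∑ j ∈ Finset.univ.erase i, (-(m i j)) * |g j|
          = - ∑ j ∈ Finset.univ.erase i, m i j * |g j| := by
        rw [← Finset.sum_neg_distrib]
        exact Finset.sum_congr rfl fun j _ => by ring
      have hpos : 0 < (-(m i j₁)) * |g j₁| :=
        mul_pos (neg_pos.mpr (hm_neg i j₁ hij)) (abs_pos.mpr hgj₁)
      have h11 := hrow0 i
      rw [← hsplit2] at h11
      rw [hsum_eq] at hsingle
      nlinarith [hm_diag i, abs_nonneg (g i)]
  -- the positive relation among the b's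
  have hbrel : ∑ j, |g j| • b j = 0 := by
    apply ha_span
    intro i
    rw [inner_sum]
    calc ∑ j, (inner ℝ (a i) (|g j| • b j) : ℝ) = ∑ j, m i j * |g j| :=
          Finset.sum_congr rfl fun j _ => by rw [real_inner_smul_right]; ring
      _ = 0 := hrow0 i
  -- the span of b is everything
  have hspan : ∀ x : Vec k, x ∈ Submodule.span ℝ (Set.range b) := by
    have horth : (Submodule.span ℝ (Set.range b))ᗮ = ⊥ := by
      rw [Submodule.eq_bot_iff]
      intro y hy
      apply hb_perp
      intro j
      exact (Submodule.mem_orthogonal _ y).mp hy (b j) (Submodule.subset_span ⟨j, rfl⟩)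
    have := Submodule.orthogonal_eq_bot_iff.mp horth
    intro x
    rw [this]
    exact Submodule.mem_top
  -- conclusion
  apply Set.eq_univ_iff_forall.mpr
  intro x
  obtain ⟨c, hc⟩ := (Submodule.mem_span_range_iff_exists_fun ℝ).mp (hspan x)
  have hne' : (Finset.univ : Finset (Fin (k+1))).Nonempty := ⟨0, Finset.mem_univ 0⟩
  set T : ℝ := Finset.univ.sup' hne' (fun j => -(c j) / |g j|) with hT_def
  refine ⟨fun j => c j + T * |g j|, ?_, ?_⟩
  · intro j
    have h1 : -(c j) / |g j| ≤ T := Finset.le_sup' (fun j => -(c j) / |g j|) (Finset.mem_univ j)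
    have h2 : -(c j) ≤ T * |g j| := (div_le_iff₀ (habs_pos j)).mp h1
    show 0 ≤ c j + T * |g j|
    linarith
  · have : ∑ j, (c j + T * |g j|) • b j
        = (∑ j, c j • b j) + T • ∑ j, |g j| • b j := by
      rw [Finset.smul_sum, ← Finset.sum_add_distrib]
      exact Finset.sum_congr rfl fun j _ => by
        rw [add_smul, smul_smul]
    rw [this, hbrel, smul_zero, add_zero, hc]
end
end

section
/- Let y ∈ ℝ^k be any point and r ∈ ℝ^k \ {0} any direction. Then for every ε > 0 and every λ̄ ≥ 0, there exists w ∈ ℤ^k such that the point y + w is at Euclidean distance less than ε from the half line {y + λr : λ ≥ λ̄}. -/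
open scoped BigOperators

noncomputable section

open Bornology in
lemma key_dirichlet (k : ℕ) (β : Vec k) (δ : ℝ) (hδ : 0 < δ) :
    ∃ n : ℕ, 1 ≤ n ∧ ∃ w : Fin k → ℤ, ‖(n : ℝ) • β - intVec k w‖ < δ := by
  set f : ℕ → Vec k := fun n => WithLp.toLp 2 (fun i => Int.fract ((n : ℝ) * β i)) with hf
  have hfb : ∀ n, f n ∈ Metric.closedBall (0 : Vec k) (Real.sqrt k) := by
    intro n
    rw [Metric.mem_closedBall, dist_zero_right, EuclideanSpace.norm_eq]
    apply Real.sqrt_le_sqrt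
    calc ∑ i, ‖f n i‖ ^ 2 ≤ ∑ _i : Fin k, (1 : ℝ) := by
          apply Finset.sum_le_sum
          intro i _
          have h1 : ‖f n i‖ ≤ 1 := by
            change ‖Int.fract ((n : ℝ) * β i)‖ ≤ 1
            rw [Real.norm_eq_abs, abs_le]
            constructor
            · linarith [Int.fract_nonneg ((n : ℝ) * β i)]
            · linarith [Int.fract_lt_one ((n : ℝ) * β i)]
          nlinarith [norm_nonneg (f n i)]
      _ = (k : ℝ) := by simp
  obtain ⟨a, -, φ, hφ, hconv⟩ :=
    tendsto_subseq_of_bounded Metric.isBounded_closedBall hfb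
  have hC : CauchySeq (f ∘ φ) := hconv.cauchySeq
  obtain ⟨N, hN⟩ := Metric.cauchySeq_iff.mp hC δ hδ
  have hlt : φ N < φ (N + 1) := hφ (Nat.lt_succ_self N)
  refine ⟨φ (N + 1) - φ N, by omega,
    fun i => ⌊(φ (N + 1) : ℝ) * β i⌋ - ⌊(φ N : ℝ) * β i⌋, ?_⟩
  have hd := hN (N + 1) (by omega) N (by omega)
  rw [dist_eq_norm] at hd
  have heq : (((φ (N + 1) - φ N : ℕ) : ℝ)) • β -
      intVec k (fun i => ⌊(φ (N + 1) : ℝ) * β i⌋ - ⌊(φ N : ℝ) * β i⌋) =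
      (f ∘ φ) (N + 1) - (f ∘ φ) N := by
    ext i
    have hc : ((φ (N + 1) - φ N : ℕ) : ℝ) = (φ (N + 1) : ℝ) - (φ N : ℝ) := by
      push_cast [Nat.cast_sub hlt.le]; ring
    simp only [Function.comp, hf, intVec, PiLp.sub_apply, PiLp.smul_apply, smul_eq_mul, PiLp.toLp_apply]
    rw [Int.fract, Int.fract, hc]
    push_cast
    ring
  rw [heq]
  exact hd

/-- Dirichlet-type approximation: some lattice translate of `y` lies within `ε` of the
half line `{y + λ r : λ ≥ λ̄}`. -/
theorem statement10 (k : ℕ) (y r : Vec k) (hr : r ≠ 0)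
    (ε : ℝ) (hε : 0 < ε) (lb : ℝ) (hlb : 0 ≤ lb) :
    ∃ w : Fin k → ℤ,
      Metric.infDist (y + intVec k w)
        {z : Vec k | ∃ lam : ℝ, lb ≤ lam ∧ z = y + lam • r} < ε := by
  
  obtain ⟨j, hj⟩ : ∃ j, r j ≠ 0 := by
    by_contra h
    push_neg at h
    exact hr (by ext i; exact h i)
  set c : ℝ := |r j| with hc
  have hc0 : 0 < c := abs_pos.mpr hj
  set M : ℕ := ⌈lb * c⌉₊ + 1 with hM
  have hM0 : 0 < (M : ℝ) := by positivity
  obtain ⟨n, hn1, w, hw⟩ := key_dirichlet k (c⁻¹ • r) (ε / M) (by positivity)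
  set w' : Fin k → ℤ := fun i => M * w i with hw'
  set lam : ℝ := (M * n : ℕ) / c with hlam
  have hlam_lb : lb ≤ lam := by
    have h1 : lb * c ≤ M := le_trans (Nat.le_ceil _) (by exact_mod_cast Nat.le_succ _)
    have h2 : (M : ℝ) ≤ (M * n : ℕ) := by
      have : (M : ℝ) * 1 ≤ (M : ℝ) * n := by
        apply mul_le_mul_of_nonneg_left _ hM0.le
        exact_mod_cast hn1
      simpa using this
    rw [hlam, le_div_iff₀ hc0]
    linarith
  have hnorm : ‖lam • r - intVec k w'‖ < ε := by
    have heq : lam • r - intVec k w' = (M : ℝ) • ((n : ℝ) • (c⁻¹ • r) - intVec k w) := by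
      ext i
      simp only [PiLp.sub_apply, PiLp.smul_apply, smul_eq_mul, intVec, hw', hlam, PiLp.toLp_apply]
      push_cast
      field_simp
    rw [heq, norm_smul, Real.norm_eq_abs, abs_of_pos hM0]
    calc (M : ℝ) * ‖(n : ℝ) • (c⁻¹ • r) - intVec k w‖ < M * (ε / M) :=
          by exact mul_lt_mul_of_pos_left hw hM0
      _ = ε := by field_simp
  refine ⟨w', ?_⟩
  have hmem : y + lam • r ∈ {z : Vec k | ∃ l : ℝ, lb ≤ l ∧ z = y + l • r} :=
    ⟨lam, hlam_lb, rfl⟩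
  calc Metric.infDist (y + intVec k w') {z : Vec k | ∃ l : ℝ, lb ≤ l ∧ z = y + l • r}
      ≤ dist (y + intVec k w') (y + lam • r) := Metric.infDist_le_dist_of_mem hmem
    _ = ‖lam • r - intVec k w'‖ := by
        rw [dist_eq_norm]
        rw [show y + intVec k w' - (y + lam • r) = -(lam • r - intVec k w') by abel]
        rw [norm_neg]
    _ < ε := hnorm
end
end

section
/- Let k ≥ 1 and let θ : ℝ^k → ℝ be nonnegative, Lipschitz continuous, subadditive, and periodic with respect to the lattice ℤ^k. Suppose there exist r ∈ ℝ^k \ {0} and λ̄ > 0 such that θ(λr) = 0 for all 0 ≤ λ ≤ λ̄. Then θ is not genuinely k-dimensional, i.e., there exist a function φ : ℝ^{k−1} → ℝ and a linear map T : ℝ^k → ℝ^{k−1} such that θ = φ ∘ T. -/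
open scoped BigOperators

noncomputable section

/-- A nonnegative, Lipschitz, subadditive, ℤ^k-periodic function vanishing on a small
segment from the origin is not genuinely k-dimensional. -/
theorem statement11 (k : ℕ) (hk : 1 ≤ k) (θ : Vec k → ℝ)
    (hnonneg : ∀ x, 0 ≤ θ x)
    (hlip : ∃ K : ℝ, 0 ≤ K ∧ ∀ x y : Vec k, |θ x - θ y| ≤ K * ‖x - y‖)
    (hsub : ∀ a b : Vec k, θ (a + b) ≤ θ a + θ b)
    (hper : ∀ (x : Vec k) (w : Fin k → ℤ), θ (x + intVec k w) = θ x)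
    (r : Vec k) (hr : r ≠ 0) (lb : ℝ) (hlb : 0 < lb)
    (hzero : ∀ lam : ℝ, 0 ≤ lam → lam ≤ lb → θ (lam • r) = 0) :
    ∃ (φ : Vec (k - 1) → ℝ) (T : Vec k →ₗ[ℝ] Vec (k - 1)), θ = φ ∘ T := by
  classical
  obtain ⟨K0, hK0, hlipK⟩ := hlip
  have hθ0 : θ 0 = 0 := by
    have := hzero 0 le_rfl (le_of_lt hlb); simpa using this
  -- θ (n • x) ≤ n * θ x
  have hmul : ∀ (n : ℕ) (x : Vec k), θ ((n : ℝ) • x) ≤ n * θ x := by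
    intro n x
    induction n with
    | zero => simp [hθ0]
    | succ n ih =>
      have hx : ((n + 1 : ℕ) : ℝ) • x = (n : ℝ) • x + x := by
        push_cast; rw [add_smul, one_smul]
      rw [hx]
      calc θ ((n : ℝ) • x + x) ≤ θ ((n : ℝ) • x) + θ x := hsub _ _
        _ ≤ n * θ x + θ x := by linarith
        _ = ((n + 1 : ℕ) : ℝ) * θ x := by push_cast; ring
  -- θ vanishes on the nonnegative ray through r
  have hray : ∀ t : ℝ, 0 ≤ t → θ (t • r) = 0 := by
    intro t ht
    obtain ⟨n0, hn0⟩ := exists_nat_ge (t / lb)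
    set n : ℕ := n0 + 1 with hn
    have hnpos : (0 : ℝ) < n := by positivity
    have ht1 : t ≤ n0 * lb := (div_le_iff₀ hlb).mp hn0
    have htn : t / n ≤ lb := by
      rw [div_le_iff₀ hnpos]
      have : (n0 : ℝ) ≤ n := by rw [hn]; push_cast; linarith
      nlinarith
    have hsplit : t • r = (n : ℝ) • ((t / n) • r) := by
      rw [smul_smul, mul_div_cancel₀ t (ne_of_gt hnpos)]
    have h0 : θ ((t / n) • r) = 0 := hzero _ (div_nonneg ht hnpos.le) htn
    have := hmul n ((t / n) • r)
    rw [h0, mul_zero] at this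
    rw [hsplit] at *
    have := hnonneg ((n : ℝ) • ((t / n) • r))
    linarith
  -- θ vanishes on the nonpositive ray through r
  have hneg : ∀ t : ℝ, 0 ≤ t → θ (-(t • r)) = 0 := by
    intro t ht
    set v := t • r with hv
    have key : ∀ ε : ℝ, 0 < ε → θ (-v) ≤ K0 * ε := by
      intro ε hε
      set a : ℕ → Vec k :=
        fun n => (WithLp.toLp 2 (fun i => Int.fract ((n : ℝ) * v i)) : EuclideanSpace ℝ (Fin k)) with ha
      have hamem : ∀ n, a n ∈ Metric.closedBall (0 : Vec k) (Real.sqrt k) := by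
        intro n
        rw [Metric.mem_closedBall, dist_zero_right, EuclideanSpace.norm_eq]
        apply Real.sqrt_le_sqrt
        calc ∑ i, ‖a n i‖ ^ 2 ≤ ∑ _i : Fin k, (1 : ℝ) := by
              apply Finset.sum_le_sum
              intro i _
              have h1 : (0 : ℝ) ≤ Int.fract ((n : ℝ) * v i) := Int.fract_nonneg _
              have h2 : Int.fract ((n : ℝ) * v i) < 1 := Int.fract_lt_one _
              have hai : a n i = Int.fract ((n : ℝ) * v i) := rfl
              rw [hai, Real.norm_eq_abs, abs_of_nonneg h1]
              nlinarith
          _ = (k : ℝ) := by simp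
      obtain ⟨L, _, ψ, hψ, hconv⟩ :=
        (isCompact_closedBall (0 : Vec k) (Real.sqrt k)).tendsto_subseq hamem
      rw [Metric.tendsto_atTop] at hconv
      obtain ⟨N, hN⟩ := hconv (ε / 2) (by linarith)
      have hmn : ψ N < ψ (N + 1) := hψ (Nat.lt_succ_self N)
      set mm := ψ (N + 1) with hmm
      set nn := ψ N with hnn
      have hdist : ‖a mm - a nn‖ < ε := by
        have h1 := hN (N + 1) (Nat.le_succ N)
        have h2 := hN N le_rfl
        simp only [Function.comp_apply] at h1 h2
        calc ‖a mm - a nn‖ = dist (a mm) (a nn) := (dist_eq_norm _ _).symm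
          _ ≤ dist (a mm) L + dist (a nn) L := dist_triangle_right _ _ _
          _ < ε := by rw [← hmm, ← hnn] at *; linarith
      set M : ℕ := mm - nn with hM
      have hM1 : 1 ≤ M := by omega
      set w : Fin k → ℤ := fun i => ⌊(mm : ℝ) * v i⌋ - ⌊(nn : ℝ) * v i⌋ with hw
      have hid : (M : ℝ) • v = intVec k w + (a mm - a nn) := by
        refine PiLp.ext (fun i => ?_)
        have hai : ∀ j : ℕ, a j i = Int.fract ((j : ℝ) * v i) := fun j => rfl
        have h1 : ((M : ℝ) • v) i = (M : ℝ) * v i := rfl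
        have h2 : (intVec k w + (a mm - a nn)) i
            = (w i : ℝ) + (a mm i - a nn i) := rfl
        rw [h1, h2, hai, hai, hw, hM]
        simp only [Int.fract]
        push_cast [Nat.cast_sub hmn.le]
        ring
      have h1 : θ (-v) ≤ θ (((M : ℝ) - 1) • v) + θ (-((M : ℝ) • v)) := by
        have hsum : ((M : ℝ) - 1) • v + (-((M : ℝ) • v)) = -v := by
          rw [sub_smul, one_smul]; abel
        calc θ (-v) = θ (((M : ℝ) - 1) • v + (-((M : ℝ) • v))) := by rw [hsum]
          _ ≤ _ := hsub _ _
      have h2 : θ (((M : ℝ) - 1) • v) = 0 := by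
        have hx : ((M : ℝ) - 1) • v = (((M : ℝ) - 1) * t) • r := by
          rw [hv, smul_smul]
        rw [hx]
        apply hray
        have : (1 : ℝ) ≤ (M : ℝ) := by exact_mod_cast hM1
        nlinarith
      have h3 : θ (-((M : ℝ) • v)) = θ (-(a mm - a nn)) := by
        have heq : -(a mm - a nn) = -((M : ℝ) • v) + intVec k w := by
          rw [hid]; abel
        rw [heq, hper]
      have h4 : θ (-(a mm - a nn)) ≤ K0 * ε := by
        have hl := hlipK (-(a mm - a nn)) 0
        rw [hθ0, sub_zero, sub_zero, norm_neg] at hl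
        have habs : θ (-(a mm - a nn)) ≤ K0 * ‖a mm - a nn‖ :=
          le_trans (le_abs_self _) hl
        calc θ (-(a mm - a nn)) ≤ K0 * ‖a mm - a nn‖ := habs
          _ ≤ K0 * ε := mul_le_mul_of_nonneg_left hdist.le hK0
      linarith
    have hle : θ (-v) ≤ 0 := by
      apply le_of_forall_pos_le_add
      intro ε hε
      have hd : ε / (K0 + 1) * (K0 + 1) = ε := div_mul_cancel₀ _ (by positivity)
      have hk1 := key (ε / (K0 + 1)) (by positivity)
      have hdp : 0 < ε / (K0 + 1) := by positivity
      nlinarith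
    have := hnonneg (-v)
    linarith
  have hall : ∀ s : ℝ, θ (s • r) = 0 := by
    intro s
    rcases le_or_gt 0 s with hs | hs
    · exact hray s hs
    · have hx : s • r = -((-s) • r) := by rw [neg_smul, neg_neg]
      rw [hx]; exact hneg (-s) (by linarith)
  -- θ is invariant under translations along r
  have hinv : ∀ (x : Vec k) (c : ℝ), θ (x + c • r) = θ x := by
    intro x c
    have h1 : θ (x + c • r) ≤ θ x := by
      have := hsub x (c • r); rw [hall c] at this; linarith
    have h2 : θ x ≤ θ (x + c • r) := by
      have h := hsub (x + c • r) ((-c) • r)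
      rw [hall (-c)] at h
      have hx : x + c • r + (-c) • r = x := by rw [neg_smul]; abel
      rw [hx] at h; linarith
    linarith
  -- build the projection
  set Ksub : Submodule ℝ (Vec k) := (ℝ ∙ r)ᗮ with hKs
  have hfin : Module.finrank ℝ Ksub = k - 1 := by
    have h1 : Module.finrank ℝ (ℝ ∙ r) = 1 := finrank_span_singleton hr
    have h2 : Module.finrank ℝ (ℝ ∙ r)
        + Module.finrank ℝ ((ℝ ∙ r)ᗮ : Submodule ℝ (Vec k))
        = Module.finrank ℝ (Vec k) :=
      Submodule.finrank_add_finrank_orthogonal (ℝ ∙ r)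
    have h3 : Module.finrank ℝ (Vec k) = k := finrank_euclideanSpace_fin
    rw [hKs]
    omega
  have hfin2 : Module.finrank ℝ (Vec (k - 1)) = k - 1 :=
    finrank_euclideanSpace_fin
  obtain ⟨e⟩ := FiniteDimensional.nonempty_linearEquiv_of_finrank_eq
    (hfin.trans hfin2.symm)
  refine ⟨fun y => θ ((e.symm y : Ksub) : Vec k),
    e.toLinearMap ∘ₗ (Submodule.orthogonalProjection Ksub).toLinearMap, ?_⟩
  funext x
  simp only [Function.comp_apply, LinearMap.coe_comp, ContinuousLinearMap.coe_coe,
    LinearEquiv.coe_coe, LinearEquiv.symm_apply_apply]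
  have hmem : x - ↑(Submodule.orthogonalProjection Ksub x) ∈ Ksubᗮ :=
    Submodule.sub_starProjection_mem_orthogonal (K := Ksub) x
  have hmem2 : x - ↑(Submodule.orthogonalProjection Ksub x) ∈ ℝ ∙ r := by
    exact (Submodule.orthogonal_orthogonal (ℝ ∙ r)).le hmem
  obtain ⟨c, hc⟩ := Submodule.mem_span_singleton.mp hmem2
  have hx : x = ↑(Submodule.orthogonalProjection Ksub x) + c • r := by rw [hc]; abel
  conv_lhs => rw [hx]
  rw [hinv]
end
end

section
/- Let k ≥ 1 and let θ : ℝ^k → ℝ be nonnegative, piecewise linear with a locally finite cell complex P, subadditive, periodic with respect to ℤ^k, genuinely k-dimensional with at most k+1 slopes, and suppose θ(0) = 0. Then θ has exactly k+1 slopes; moreover, if g^1, …, g^{k+1} is the gradient set of θ, then cone(g^1, …, g^{k+1}) = ℝ^k, and for every i = 1, …, k+1 there exists a maximal cell P of the subcomplex P_i (the maximal cells with gradient g^i) with 0 ∈ P. -/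
open scoped BigOperators

noncomputable section

/-- Kronecker-type recurrence: multiples of `u` come back near the integer lattice. -/
lemma slope_recur (k : ℕ) (u : Vec k) (step δ : ℝ) (hstep : 0 < step) (hδ : 0 < δ) :
    ∃ (t : ℝ) (w : Fin k → ℤ), step ≤ t ∧ ‖t • u + intVec k w‖ < δ := by
  set a : ℕ → Vec k := fun n => (WithLp.toLp 2 (fun i => Int.fract ((n * step) * u i)) : Vec k) with ha
  have hbd : Bornology.IsBounded (Set.range a) := by
    apply Metric.isBounded_range_iff.2
    refine ⟨2 * Real.sqrt k, ?_⟩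
    intro m n
    have : ∀ i, |a m i - a n i| ≤ 2 := by
      intro i
      have h1 := Int.fract_nonneg ((m * step) * u i)
      have h2 := Int.fract_lt_one ((m * step) * u i)
      have h3 := Int.fract_nonneg ((n * step) * u i)
      have h4 := Int.fract_lt_one ((n * step) * u i)
      simp only [ha, PiLp.toLp_apply]
      rw [abs_le]; constructor <;> nlinarith
    calc dist (a m) (a n) = ‖a m - a n‖ := dist_eq_norm _ _
      _ ≤ Real.sqrt (∑ i : Fin k, (2:ℝ)^2) := by
          rw [EuclideanSpace.norm_eq]
          apply Real.sqrt_le_sqrt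
          apply Finset.sum_le_sum
          intro i _
          have := this i
          have habs : ‖(a m - a n) i‖ = |a m i - a n i| := by
            simp [Real.norm_eq_abs]
          rw [habs]
          nlinarith [abs_nonneg (a m i - a n i)]
      _ ≤ 2 * Real.sqrt k := by
          rw [Finset.sum_const, Finset.card_univ, Fintype.card_fin]
          rw [show k • (2:ℝ)^2 = (2:ℝ)^2 * k by rw [nsmul_eq_mul]; ring]
          rw [Real.sqrt_mul (by positivity), Real.sqrt_sq (by norm_num)]
  obtain ⟨L, -, φ, hφmono, hφlim⟩ := tendsto_subseq_of_bounded hbd (fun n => Set.mem_range_self n)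
  have hcauchy : ∃ N : ℕ, dist (a (φ (N+1))) (a (φ N)) < δ := by
    have := Metric.tendsto_atTop.1 hφlim (δ/2) (by positivity)
    obtain ⟨N, hN⟩ := this
    exact ⟨N, by
      have h1 := hN N (le_refl N)
      have h2 := hN (N+1) (Nat.le_succ N)
      calc dist (a (φ (N+1))) (a (φ N)) ≤ dist (a (φ (N+1))) L + dist L (a (φ N)) := dist_triangle _ _ _
        _ < δ/2 + δ/2 := by rw [dist_comm L]; exact add_lt_add h2 h1
        _ = δ := by ring⟩
  obtain ⟨N, hN⟩ := hcauchy
  set m := φ (N+1)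
  set n := φ N
  have hmn : n < m := hφmono (Nat.lt_succ_self N)
  refine ⟨(m - n : ℕ) * step, fun i => ⌊(n * step) * u i⌋ - ⌊(m * step) * u i⌋, ?_, ?_⟩
  · have : (1:ℝ) ≤ (m - n : ℕ) := by exact_mod_cast Nat.one_le_iff_ne_zero.2 (by omega)
    nlinarith
  · have hveq : ((m - n : ℕ) * step) • u + intVec k (fun i => ⌊(n * step) * u i⌋ - ⌊(m * step) * u i⌋) = a m - a n := by
      ext i
      simp only [intVec, PiLp.toLp_apply, PiLp.add_apply, PiLp.smul_apply, PiLp.sub_apply, smul_eq_mul, ha]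
      rw [Int.fract, Int.fract]
      push_cast [Nat.cast_sub hmn.le]
      ring
    rw [hveq, ← dist_eq_norm]
    exact hN

open Classical in
/-- dimension-type measure on cells -/
def cdim {k : ℕ} (P : Set (Vec k)) : ℕ :=
  if P.Nonempty then Module.finrank ℝ (vectorSpan ℝ P) + 1 else 0

lemma cdim_le {k : ℕ} (P : Set (Vec k)) : cdim P ≤ k + 1 := by
  classical
  unfold cdim
  split
  · have h1 : Module.finrank ℝ (vectorSpan ℝ P) ≤ Module.finrank ℝ (Vec k) :=
      Submodule.finrank_le _
    have h2 : Module.finrank ℝ (Vec k) = k := finrank_euclideanSpace_fin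
    omega
  · omega

lemma cdim_strict {k : ℕ} (PC : PolyhedralComplex k) {P Q : Set (Vec k)}
    (hP : P ∈ PC.cells) (hQ : Q ∈ PC.cells) (hsub : P ⊆ Q) (hne : P ≠ Q) :
    cdim P < cdim Q := by
  have hQne : Q.Nonempty := by
    rcases Set.eq_empty_or_nonempty Q with h | h
    · exact absurd (le_antisymm (h ▸ hsub) (h ▸ Set.empty_subset _)) hne
    · exact h
  rcases Set.eq_empty_or_nonempty P with hPe | hPne
  · unfold cdim
    subst hPe
    simp [hQne]
  · -- P is a proper face of Q
    obtain ⟨-, hface⟩ := PC.inter_face P hP Q hQ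
    rw [Set.inter_eq_left.2 hsub] at hface
    obtain ⟨a, b, hval, hPeq⟩ := hface
    -- some q ∈ Q with ⟨a,q⟩ < b
    have hq : ∃ q ∈ Q, (inner ℝ a q : ℝ) < b := by
      by_contra h
      push_neg at h
      apply hne
      apply Set.Subset.antisymm hsub
      intro x hx
      rw [hPeq]
      exact ⟨hx, le_antisymm (hval x hx) (h x hx)⟩
    obtain ⟨q, hqQ, hqlt⟩ := hq
    obtain ⟨p, hpP⟩ := id hPne
    -- linear functional
    set f : Vec k →ₗ[ℝ] ℝ := innerSL ℝ a |>.toLinearMap with hf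
    have hker : vectorSpan ℝ P ≤ LinearMap.ker f := by
      rw [vectorSpan_def]
      rw [Submodule.span_le]
      rintro v ⟨x, hx, y, hy, rfl⟩
      rw [hPeq] at hx hy
      simp only [SetLike.mem_coe, LinearMap.mem_ker, hf, vsub_eq_sub]
      simp only [ContinuousLinearMap.coe_coe, innerSL_apply_apply, inner_sub_right]
      rw [hx.2, hy.2]; ring
    have hlt : vectorSpan ℝ P < vectorSpan ℝ Q := by
      refine lt_of_le_of_ne (vectorSpan_mono ℝ hsub) ?_
      intro heq
      have hmem : q - p ∈ vectorSpan ℝ Q := by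
        rw [vectorSpan_def]
        exact Submodule.subset_span ⟨q, hqQ, p, hsub hpP, rfl⟩
      rw [← heq] at hmem
      have := hker hmem
      simp only [LinearMap.mem_ker, hf, ContinuousLinearMap.coe_coe, innerSL_apply_apply,
        inner_sub_right] at this
      have hpb : (inner ℝ a p : ℝ) = b := by
        rw [hPeq] at hpP; exact hpP.2
      rw [hpb] at this
      have : (inner ℝ a q : ℝ) = b := by linarith
      linarith
    have := Submodule.finrank_lt_finrank_of_lt hlt
    unfold cdim
    rw [if_pos hPne, if_pos hQne]
    omega

lemma exists_maximal_above {k : ℕ} (PC : PolyhedralComplex k) {P : Set (Vec k)}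
    (hP : P ∈ PC.cells) : ∃ R, IsMaximalCell PC R ∧ P ⊆ R := by
  suffices h : ∀ d : ℕ, ∀ P ∈ PC.cells, k + 1 - cdim P ≤ d → ∃ R, IsMaximalCell PC R ∧ P ⊆ R by
    exact h (k + 1) P hP (by omega)
  intro d
  induction d with
  | zero =>
      intro P hP hd
      refine ⟨P, ⟨hP, ?_⟩, subset_rfl⟩
      intro Q hQ hsub
      by_contra hne
      have := cdim_strict PC hP hQ hsub (fun h => hne h.symm)
      have := cdim_le Q
      omega
  | succ d ih =>
      intro P hP hd
      by_cases hmax : ∀ Q ∈ PC.cells, P ⊆ Q → Q = P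
      · exact ⟨P, ⟨hP, hmax⟩, subset_rfl⟩
      · push_neg at hmax
        obtain ⟨Q, hQ, hsub, hne⟩ := hmax
        have hlt := cdim_strict PC hP hQ hsub (Ne.symm hne)
        obtain ⟨R, hR, hQR⟩ := ih Q hQ (by omega)
        exact ⟨R, hR, hsub.trans hQR⟩

lemma exists_maximal_mem {k : ℕ} (PC : PolyhedralComplex k) (hcomp : PC.Complete)
    (x : Vec k) : ∃ R, IsMaximalCell PC R ∧ x ∈ R := by
  have hx : x ∈ ⋃₀ PC.cells := by rw [hcomp]; trivial
  obtain ⟨P, hP, hxP⟩ := hx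
  obtain ⟨R, hR, hPR⟩ := exists_maximal_above PC hP
  exact ⟨R, hR, hPR hxP⟩

lemma line_invariant_not_genuine {k : ℕ} (hk : 1 ≤ k) (θ : Vec k → ℝ) (u : Vec k) (hu : u ≠ 0)
    (hinv : ∀ (x : Vec k) (c : ℝ), θ (x + c • u) = θ x) : ¬ GenuinelyFullDim k θ := by
  intro hgen
  apply hgen
  set E : Submodule ℝ (Vec k) := (Submodule.span ℝ {u})ᗮ with hE
  have hfr : Module.finrank ℝ E = k - 1 := by
    have h1 : Module.finrank ℝ (Submodule.span ℝ {u}) + Module.finrank ℝ E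
        = Module.finrank ℝ (Vec k) := Submodule.finrank_add_finrank_orthogonal _
    rw [finrank_span_singleton hu] at h1
    have h2 : Module.finrank ℝ (Vec k) = k := finrank_euclideanSpace_fin
    omega
  set e0 := (stdOrthonormalBasis ℝ E).repr with he0
  set e1 := LinearIsometryEquiv.piLpCongrLeft 2 ℝ ℝ (finCongr hfr) with he1
  set e : E ≃ₗᵢ[ℝ] Vec (k-1) := e0.trans e1 with he
  refine ⟨fun y => θ ((e.symm y : E) : Vec k),
    (e.toLinearEquiv.toLinearMap.comp E.orthogonalProjectionOnto.toLinearMap), ?_⟩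
  funext x
  simp only [Function.comp_apply, LinearMap.coe_comp, ContinuousLinearMap.coe_coe,
    LinearEquiv.coe_coe, LinearIsometryEquiv.coe_toLinearEquiv]
  rw [LinearIsometryEquiv.symm_apply_apply]
  obtain ⟨y, hy, z, hz, hxyz⟩ := Submodule.exists_add_mem_mem_orthogonal (K := Submodule.span ℝ {u}) x
  obtain ⟨c, hc⟩ := Submodule.mem_span_singleton.1 hy
  have hzE : z ∈ E := hz
  have hproj : ((E.orthogonalProjectionOnto x : E) : Vec k) = z := by
    rw [← Submodule.starProjection_apply]
    apply Submodule.eq_starProjection_of_mem_orthogonal hzE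
    have hxz : x - z = c • u := by rw [hxyz, ← hc]; abel
    rw [hxz]
    exact Submodule.le_orthogonal_orthogonal _ (Submodule.smul_mem _ c (Submodule.mem_span_singleton_self u))
  rw [hproj, hxyz, ← hc, add_comm]
  rw [hinv]

lemma coneOfSet_mono {k : ℕ} {S T : Set (Vec k)} (h : S ⊆ T) : coneOfSet S ⊆ coneOfSet T := by
  rintro x ⟨n, v, lam, hv, hlam, rfl⟩
  exact ⟨n, v, lam, fun i => h (hv i), hlam, rfl⟩

lemma zero_mem_coneOfSet {k : ℕ} (S : Set (Vec k)) : (0 : Vec k) ∈ coneOfSet S :=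
  ⟨0, Fin.elim0, Fin.elim0, fun i => i.elim0, fun i => i.elim0, by simp⟩

lemma subset_coneOfSet {k : ℕ} (S : Set (Vec k)) : S ⊆ coneOfSet S := by
  intro g hg
  exact ⟨1, fun _ => g, fun _ => 1, fun _ => hg, fun _ => zero_le_one, by simp⟩

lemma smul_mem_coneOfSet {k : ℕ} {S : Set (Vec k)} {x : Vec k} (hx : x ∈ coneOfSet S)
    {t : ℝ} (ht : 0 ≤ t) : t • x ∈ coneOfSet S := by
  obtain ⟨n, v, lam, hv, hlam, rfl⟩ := hx
  exact ⟨n, v, fun i => t * lam i, hv, fun i => mul_nonneg ht (hlam i), by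
    rw [Finset.smul_sum]; exact Finset.sum_congr rfl fun i _ => by rw [smul_smul]⟩

lemma add_mem_coneOfSet {k : ℕ} {S : Set (Vec k)} {x y : Vec k} (hx : x ∈ coneOfSet S)
    (hy : y ∈ coneOfSet S) : x + y ∈ coneOfSet S := by
  obtain ⟨n, v, lam, hv, hlam, rfl⟩ := hx
  obtain ⟨m, w, mu, hw, hmu, rfl⟩ := hy
  refine ⟨n + m, Fin.append v w, Fin.append lam mu, ?_, ?_, ?_⟩
  · intro i
    refine Fin.addCases (fun j => ?_) (fun j => ?_) i
    · rw [Fin.append_left]; exact hv j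
    · rw [Fin.append_right]; exact hw j
  · intro i
    refine Fin.addCases (fun j => ?_) (fun j => ?_) i
    · rw [Fin.append_left]; exact hlam j
    · rw [Fin.append_right]; exact hmu j
  · rw [Fin.sum_univ_add]
    congr 1
    · exact Finset.sum_congr rfl fun j _ => by rw [Fin.append_left, Fin.append_left]
    · exact Finset.sum_congr rfl fun j _ => by rw [Fin.append_right, Fin.append_right]

lemma convex_coneOfSet {k : ℕ} (S : Set (Vec k)) : Convex ℝ (coneOfSet S) := by
  intro x hx y hy a b ha hb _
  exact add_mem_coneOfSet (smul_mem_coneOfSet hx ha) (smul_mem_coneOfSet hy hb)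

lemma coneOfSet_eq_univ_of_closure {k : ℕ} (S : Set (Vec k))
    (h : closure (coneOfSet S) = Set.univ) : coneOfSet S = Set.univ := by
  have hconv := convex_coneOfSet S
  -- affine span is top
  have hint : (interior (coneOfSet S)).Nonempty := by
    rw [hconv.interior_nonempty_iff_affineSpan_eq_top]
    have hclosed : IsClosed ((affineSpan ℝ (coneOfSet S) : AffineSubspace ℝ (Vec k)) : Set (Vec k)) :=
      (affineSpan ℝ (coneOfSet S)).closed_of_finiteDimensional
    have : closure (coneOfSet S) ⊆ (affineSpan ℝ (coneOfSet S) : Set (Vec k)) :=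
      closure_minimal (subset_affineSpan ℝ _) hclosed
    rw [h] at this
    exact eq_top_iff.2 fun x _ => this trivial
  obtain ⟨y, hy⟩ := hint
  apply Set.eq_univ_of_forall
  intro x
  by_cases hxy : x = y
  · exact hxy ▸ interior_subset hy
  · have hz : x + (1:ℝ) • (x - y) ∈ closure (coneOfSet S) := by rw [h]; trivial
    have hseg : x ∈ openSegment ℝ y (x + (1:ℝ) • (x - y)) := by
      refine ⟨1/2, 1/2, by norm_num, by norm_num, by norm_num, ?_⟩
      simp only [one_smul]
      module
    exact interior_subset (hconv.openSegment_interior_closure_subset_interior hy hz hseg)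

lemma card_of_cone_univ {k : ℕ} (hk1 : 1 ≤ k) (S : Set (Vec k)) (hfin : S.Finite)
    (hcone : coneOfSet S = Set.univ) : k + 1 ≤ S.ncard := by
  classical
  set s : Finset (Vec k) := hfin.toFinset with hs
  have hSs : S = ↑s := by simp [hs]
  have hn : S.ncard = s.card := by rw [hSs]; exact Set.ncard_coe_finset s
  have hspan : Submodule.span ℝ S = ⊤ := by
    rw [eq_top_iff]
    intro x _
    have hx : x ∈ coneOfSet S := by rw [hcone]; trivial
    obtain ⟨n, v, lam, hv, hlam, rfl⟩ := hx
    exact Submodule.sum_mem _ fun i _ =>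
      Submodule.smul_mem _ _ (Submodule.subset_span (hv i))
  have hk : k ≤ s.card := by
    have h1 : Set.finrank ℝ (↑s : Set (Vec k)) = k := by
      rw [Set.finrank, ← hSs, hspan, finrank_top]
      exact finrank_euclideanSpace_fin
    have h2 : Set.finrank ℝ (↑s : Set (Vec k)) ≤ s.card := finrank_span_finset_le_card s
    omega
  rw [hn]
  by_contra hlt
  push_neg at hlt
  have hcard : s.card = k := by omega
  have hli : LinearIndependent ℝ (fun g : {x // x ∈ s} => (g : Vec k)) := by
    apply linearIndependent_of_top_le_span_of_card_eq_finrank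
    · rw [← hspan, hSs]
      have : Set.range (fun g : {x // x ∈ s} => (g : Vec k)) = ↑s := by
        ext x; simp
      rw [this]
    · rw [Fintype.card_coe, hcard]
      exact finrank_euclideanSpace_fin.symm
  have hneg : (-(∑ g ∈ s, g) : Vec k) ∈ coneOfSet S := by rw [hcone]; trivial
  obtain ⟨n, v, lam, hv, hlam, hsum⟩ := hneg
  set c : Vec k → ℝ := fun g => ∑ i ∈ Finset.univ.filter (fun i => v i = g), lam i with hc
  have hcnonneg : ∀ g, 0 ≤ c g := fun g => Finset.sum_nonneg fun i _ => hlam i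
  have hmaps : ∀ i ∈ Finset.univ, v i ∈ s := fun i _ => by
    rw [hs, Set.Finite.mem_toFinset hfin]; exact hv i
  have hcoll : ∑ g ∈ s, c g • g = ∑ i : Fin n, lam i • v i := by
    calc ∑ g ∈ s, c g • g = ∑ g ∈ s, ∑ i ∈ Finset.univ.filter (fun i => v i = g), lam i • v i := by
          refine Finset.sum_congr rfl fun g hg => ?_
          rw [hc]
          simp only [Finset.sum_smul]
          exact Finset.sum_congr rfl fun i hi => by rw [(Finset.mem_filter.1 hi).2]
      _ = ∑ i : Fin n, lam i • v i := Finset.sum_fiberwise_of_maps_to hmaps _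
  have hzero : ∑ g ∈ s, (c g + 1) • g = 0 := by
    have h3 : ∑ g ∈ s, (c g + 1) • g = (∑ g ∈ s, c g • g) + ∑ g ∈ s, g := by
      rw [← Finset.sum_add_distrib]
      exact Finset.sum_congr rfl fun g _ => by rw [add_smul, one_smul]
    rw [h3, hcoll, ← hsum]
    abel
  have hzero' : ∑ g : {x // x ∈ s}, (c (g : Vec k) + 1) • (g : Vec k) = 0 := by
    rw [Finset.univ_eq_attach, Finset.sum_attach s (fun g => (c g + 1) • g)]
    exact hzero
  have hall := Fintype.linearIndependent_iff.1 hli (fun g => c (g : Vec k) + 1) hzero'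
  have hsne : s.Nonempty := Finset.card_pos.1 (by omega)
  obtain ⟨g0, hg0⟩ := hsne
  have := hall ⟨g0, hg0⟩
  have := hcnonneg g0
  simp at *
  linarith

/-- A genuinely k-dimensional function as in the hypotheses has exactly k+1 slopes,
its gradients positively span `ℝ^k`, and each gradient is attained on a maximal cell
containing the origin. -/
theorem statement12 (k : ℕ) (hk : 1 ≤ k) (θ : Vec k → ℝ)
    (hnonneg : ∀ x, 0 ≤ θ x)
    (PC : PolyhedralComplex k) (grad : Set (Vec k) → Vec k)
    (hpwl : IsPWLWith PC grad θ) (hlf : PC.LocFinite)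
    (hsub : ∀ a b : Vec k, θ (a + b) ≤ θ a + θ b)
    (hper : ∀ (x : Vec k) (w : Fin k → ℤ), θ (x + intVec k w) = θ x)
    (hgen : GenuinelyFullDim k θ)
    (hfin : (gradSet PC grad).Finite)
    (hslopes : (gradSet PC grad).ncard ≤ k + 1)
    (h0 : θ 0 = 0) :
    (gradSet PC grad).ncard = k + 1 ∧
    coneOfSet (gradSet PC grad) = Set.univ ∧
    ∀ g ∈ gradSet PC grad,
      ∃ P : Set (Vec k), IsMaximalCell PC P ∧ grad P = g ∧ (0 : Vec k) ∈ P := by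
    classical
    -- the set of gradients attained on maximal cells containing the origin
    set G0 : Set (Vec k) :=
      {g | ∃ P : Set (Vec k), IsMaximalCell PC P ∧ grad P = g ∧ (0 : Vec k) ∈ P} with hG0
    have hG0sub : G0 ⊆ gradSet PC grad := by
      rintro g ⟨P, hP, hgP, -⟩; exact ⟨P, hP, hgP⟩
    have hG0fin : G0.Finite := hfin.subset hG0sub
    -- local structure at the origin
    obtain ⟨ε, hε, F, hFan, htr⟩ := hlf 0
    have hcell0 : ∀ P ∈ PC.cells, (P ∩ Metric.ball (0 : Vec k) ε).Nonempty → (0 : Vec k) ∈ P := by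
      intro P hP hne
      have hmem : (P ∩ Metric.ball (0 : Vec k) ε)
          ∈ {S : Set (Vec k) | ∃ P ∈ PC.cells, S = P ∩ Metric.ball (0:Vec k) ε ∧ S.Nonempty} :=
        ⟨P, hP, rfl, hne⟩
      rw [htr] at hmem
      obtain ⟨C, hC, hSeq, hSne⟩ := hmem
      have himg : ((fun x => x + (0 : Vec k)) '' C) = C := by
        simp only [add_zero, Set.image_id']
      rw [himg] at hSeq
      obtain ⟨y, hy⟩ := hSne
      rw [hSeq] at hy
      have h0C : (0 : Vec k) ∈ C := by
        have := hFan.2 C hC y hy.1 0 le_rfl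
        rwa [zero_smul] at this
      have h0m : (0 : Vec k) ∈ P ∩ Metric.ball (0 : Vec k) ε := by
        rw [hSeq]; exact ⟨h0C, Metric.mem_ball_self hε⟩
      exact h0m.1
    -- θ is exactly linear on maximal cells containing 0
    have hlin : ∀ P : Set (Vec k), IsMaximalCell PC P → (0 : Vec k) ∈ P →
        ∀ x ∈ P, θ x = (inner ℝ (grad P) x : ℝ) := by
      intro P hP h0P x hx
      obtain ⟨δ, hδ⟩ := hpwl.2.2 P hP
      have h00 := hδ 0 h0P
      rw [inner_zero_right, zero_add] at h00
      have hδ0 : δ = 0 := by rw [h0] at h00; exact h00.symm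
      rw [hδ x hx, hδ0, add_zero]
    -- representation of θ near 0
    have hrep : ∀ x : Vec k, ‖x‖ < ε → ∃ g ∈ G0, θ x = (inner ℝ g x : ℝ) := by
      intro x hx
      obtain ⟨P, hP, hxP⟩ := exists_maximal_mem PC hpwl.2.1 x
      have h0P : (0 : Vec k) ∈ P :=
        hcell0 P hP.1 ⟨x, hxP, mem_ball_zero_iff.2 hx⟩
      exact ⟨grad P, ⟨P, hP, rfl, h0P⟩, hlin P hP h0P x hxP⟩
    -- G0 is nonempty
    have hG0ne : G0.Nonempty := by
      obtain ⟨g, hg, -⟩ := hrep 0 (by simpa using hε)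
      exact ⟨g, hg⟩
    set sG : Finset (Vec k) := hG0fin.toFinset with hsG
    have hsGne : sG.Nonempty := by
      obtain ⟨g, hg⟩ := hG0ne
      exact ⟨g, by rw [hsG, Set.Finite.mem_toFinset]; exact hg⟩
    have hmemsG : ∀ g, g ∈ sG ↔ g ∈ G0 := fun g => by
      rw [hsG, Set.Finite.mem_toFinset]
    -- the sublinear upper bound p
    set p : Vec k → ℝ := fun x => sG.sup' hsGne (fun g => (inner ℝ g x : ℝ)) with hp
    have hple : ∀ g ∈ G0, ∀ x : Vec k, (inner ℝ g x : ℝ) ≤ p x := by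
      intro g hg x
      exact Finset.le_sup' (fun g => (inner ℝ g x : ℝ)) ((hmemsG g).2 hg)
    have hpub : ∀ (x : Vec k) (c : ℝ), (∀ g ∈ G0, (inner ℝ g x : ℝ) ≤ c) → p x ≤ c := by
      intro x c hc
      exact Finset.sup'_le _ _ fun g hg => hc g ((hmemsG g).1 hg)
    -- iterated subadditivity
    have hiter : ∀ (n : ℕ) (y : Vec k), θ ((n : ℝ) • y) ≤ n * θ y := by
      intro n
      induction n with
      | zero => intro y; simpa using le_of_eq h0
      | succ n ih =>
          intro y
          have : ((n + 1 : ℕ) : ℝ) • y = (n : ℝ) • y + y := by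
            push_cast; rw [add_smul, one_smul]
          rw [this]
          calc θ ((n : ℝ) • y + y) ≤ θ ((n : ℝ) • y) + θ y := hsub _ _
            _ ≤ n * θ y + θ y := by linarith [ih y]
            _ = (n + 1 : ℕ) * θ y := by push_cast; ring
    -- global bound θ ≤ p
    have hbound : ∀ x : Vec k, θ x ≤ p x := by
      intro x
      obtain ⟨n, hn⟩ := exists_nat_gt (‖x‖ / ε)
      have hn0 : 0 < (n : ℝ) := lt_of_le_of_lt (div_nonneg (norm_nonneg x) hε.le) hn
      have hxn : ‖(n : ℝ)⁻¹ • x‖ < ε := by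
        rw [norm_smul, Real.norm_eq_abs, abs_inv, abs_of_pos hn0]
        rw [inv_mul_eq_div, div_lt_iff₀ hn0] at *
        nlinarith [div_lt_iff₀ hε |>.1 hn]
      obtain ⟨g, hg, hgx⟩ := hrep _ hxn
      have h1 : θ x ≤ n * θ ((n : ℝ)⁻¹ • x) := by
        have := hiter n ((n : ℝ)⁻¹ • x)
        rwa [smul_smul, mul_inv_cancel₀ (ne_of_gt hn0), one_smul] at this
      have h2 : θ ((n : ℝ)⁻¹ • x) = (n : ℝ)⁻¹ * (inner ℝ g x : ℝ) := by
        rw [hgx, real_inner_smul_right]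
      have h3 : (inner ℝ g x : ℝ) ≤ p x := hple g hg x
      calc θ x ≤ n * ((n : ℝ)⁻¹ * (inner ℝ g x : ℝ)) := by rw [← h2]; exact h1
        _ = (inner ℝ g x : ℝ) := by field_simp
        _ ≤ p x := h3
    -- Lipschitz-type bound
    set M : ℝ := sG.sup' hsGne (fun g => ‖g‖) with hM
    have hpM : ∀ x : Vec k, p x ≤ M * ‖x‖ := by
      intro x
      apply hpub
      intro g hg
      calc (inner ℝ g x : ℝ) ≤ ‖g‖ * ‖x‖ := real_inner_le_norm g x
        _ ≤ M * ‖x‖ := by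
            apply mul_le_mul_of_nonneg_right _ (norm_nonneg x)
            exact Finset.le_sup' (fun g => ‖g‖) ((hmemsG g).2 hg)
    have hθM : ∀ x : Vec k, θ x ≤ M * ‖x‖ := fun x => (hbound x).trans (hpM x)
    have hlow : ∀ x v : Vec k, θ x - M * ‖v‖ ≤ θ (x + v) := by
      intro x v
      have h1 : θ x ≤ θ (x + v) + θ (-v) := by
        have := hsub (x + v) (-v)
        simpa using this
      have h2 : θ (-v) ≤ M * ‖v‖ := by
        have := hθM (-v)
        rwa [norm_neg] at this
      linarith
    -- key invariance claim
    have hkey : ∀ u : Vec k, (∀ g ∈ G0, (inner ℝ g u : ℝ) ≤ 0) →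
        ∀ (x : Vec k) (c : ℝ), θ (x + c • u) = θ x := by
      intro u hu
      have hray : ∀ t : ℝ, 0 ≤ t → θ (t • u) = 0 := by
        intro t ht
        have h1 : θ (t • u) ≤ p (t • u) := hbound _
        have h2 : p (t • u) ≤ 0 := by
          apply hpub
          intro g hg
          rw [real_inner_smul_right]
          exact mul_nonpos_of_nonneg_of_nonpos ht (hu g hg)
        linarith [hnonneg (t • u)]
      have hmono : ∀ (x : Vec k) (t : ℝ), 0 ≤ t → θ (x + t • u) ≤ θ x := by
        intro x t ht
        calc θ (x + t • u) ≤ θ x + θ (t • u) := hsub _ _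
          _ = θ x := by rw [hray t ht, add_zero]
      have hge : ∀ (x : Vec k) (s : ℝ), 0 ≤ s → θ x ≤ θ (x + s • u) := by
        intro x s hs
        rcases eq_or_lt_of_le hs with rfl | hs
        · simp
        by_contra hcon
        push_neg at hcon
        set δ := (θ x - θ (x + s • u)) / (M + 1) with hδdef
        have hM0 : 0 ≤ M := le_trans (norm_nonneg _) (Finset.le_sup' (fun g => ‖g‖)
          ((hmemsG _).2 hG0ne.choose_spec))
        have hMpos : 0 < M + 1 := by linarith
        have hδpos : 0 < δ := div_pos (by linarith) hMpos
        obtain ⟨t, w, hts, htw⟩ := slope_recur k u s δ hs hδpos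
        have hstep1 : θ (x + s • u) ≥ θ (x + t • u) := by
          have := hmono (x + s • u) (t - s) (by linarith)
          have heq : x + s • u + (t - s) • u = x + t • u := by
            rw [add_assoc, ← add_smul]; ring_nf
          rwa [heq] at this
        have hstep2 : θ (x + t • u) = θ (x + t • u + intVec k w) := (hper _ w).symm
        have hstep3 : θ x - M * ‖t • u + intVec k w‖ ≤ θ (x + (t • u + intVec k w)) :=
          hlow x (t • u + intVec k w)
        have heq2 : x + (t • u + intVec k w) = x + t • u + intVec k w := by abel
        rw [heq2] at hstep3
        have : θ x - M * δ ≤ θ (x + s • u) := by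
          have h4 : M * ‖t • u + intVec k w‖ ≤ M * δ :=
            mul_le_mul_of_nonneg_left htw.le hM0
          linarith
        have hle : θ x - θ (x + s • u) ≤ M * δ := by linarith
        have hδd : δ * (M + 1) = θ x - θ (x + s • u) :=
          div_mul_cancel₀ _ (ne_of_gt hMpos)
        have hδd' : δ * M + δ = θ x - θ (x + s • u) := by rw [← hδd]; ring
        linarith [hδpos, hle, hδd']
      have heq : ∀ (x : Vec k) (s : ℝ), 0 ≤ s → θ (x + s • u) = θ x :=
        fun x s hs => le_antisymm (hmono x s hs) (hge x s hs)
      intro x c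
      rcases le_or_gt 0 c with hc | hc
      · exact heq x c hc
      · have := heq (x + c • u) (-c) (by linarith)
        have heq2 : x + c • u + (-c) • u = x := by
          rw [add_assoc, ← add_smul]; simp
        rw [heq2] at this
        exact this.symm
    -- no u ≠ 0 with all gradients nonpositive against it
    have hnou : ∀ u : Vec k, u ≠ 0 → ¬ (∀ g ∈ G0, (inner ℝ g u : ℝ) ≤ 0) := by
      intro u hu h
      exact (line_invariant_not_genuine hk θ u hu (hkey u h)) hgen
    -- the cone over G0 is dense, hence everything
    have hclos : closure (coneOfSet G0) = Set.univ := by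
      by_contra hne
      obtain ⟨x, hx⟩ := Set.ne_univ_iff_exists_notMem _ |>.1 hne
      obtain ⟨f, cv, hfy, hfx⟩ :=
        geometric_hahn_banach_closed_point ((convex_coneOfSet G0).closure) isClosed_closure hx
      have hcv : 0 < cv := by
        have := hfy 0 (subset_closure (zero_mem_coneOfSet G0))
        simpa using this
      have hfnonpos : ∀ y ∈ coneOfSet G0, f y ≤ 0 := by
        intro y hy
        by_contra hfy'
        push_neg at hfy'
        set t := cv / f y + 1 with ht
        have htpos : 0 < t := by positivity
        have := hfy (t • y) (subset_closure (smul_mem_coneOfSet hy htpos.le))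
        rw [map_smul, smul_eq_mul, ht, add_mul, one_mul,
          div_mul_cancel₀ cv (ne_of_gt hfy')] at this
        linarith
      set u : Vec k := (InnerProductSpace.toDual ℝ (Vec k)).symm f with hudef
      have hfu : ∀ y : Vec k, (inner ℝ u y : ℝ) = f y := fun y =>
        InnerProductSpace.toDual_symm_apply
      have hune : u ≠ 0 := by
        intro h
        have := hfu x
        rw [h, inner_zero_left] at this
        linarith
      apply hnou u hune
      intro g hg
      rw [real_inner_comm, hfu g]
      exact hfnonpos g (subset_coneOfSet G0 hg)
    have hconeG0 : coneOfSet G0 = Set.univ := coneOfSet_eq_univ_of_closure G0 hclos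
    have hcardG0 : k + 1 ≤ G0.ncard := card_of_cone_univ hk G0 hG0fin hconeG0
    have hGeq : G0 = gradSet PC grad :=
      Set.eq_of_subset_of_ncard_le hG0sub (le_trans hslopes hcardG0) hfin
    refine ⟨?_, ?_, ?_⟩
    · rw [← hGeq]
      have : G0.ncard ≤ k + 1 := by rw [hGeq]; exact hslopes
      omega
    · rw [← hGeq]; exact hconeG0
    · intro g hg
      rw [← hGeq] at hg
      exact hg
end
end
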